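/- arXiv:2310.15453 — 4 statements merged into one kernel-verified Lean document; each statement's English description precedes it below -/
import Mathlib

section
/- For every integer n ≥ 1 and every real number p > 0 with p ≠ 1, one has 1/n + p/(n+p) + ψ(n) − ψ(n+p+1) ≠ 0, where ψ is the digamma function. -/
open Real Set Filter Topology

/-- The digamma function: the logarithmic derivative of the Gamma function. -/
noncomputable def digamma (x : ℝ) : ℝ := deriv Real.Gamma x / Real.Gamma x

lemma diffGamma {x : ℝ} (hx : 0 < x) : DifferentiableAt ℝ Real.Gamma x :=
  Real.differentiableAt_Gamma fun m => by
    have : (0:ℝ) ≤ m := Nat.cast_nonneg m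
    intro h; rw [h] at hx; linarith

lemma digamma_add_one {x : ℝ} (hx : 0 < x) : digamma (x + 1) = digamma x + 1 / x := by
  have hG : Real.Gamma x ≠ 0 := (Real.Gamma_pos_of_pos hx).ne'
  have h1 : HasDerivAt Real.Gamma (Real.Gamma x + x * deriv Real.Gamma x) (x + 1) := by
    have h2 : HasDerivAt (fun y : ℝ => y * Real.Gamma y)
        (1 * Real.Gamma x + x * deriv Real.Gamma x) x :=
      (hasDerivAt_id x).mul (diffGamma hx).hasDerivAt
    have h3 : HasDerivAt (fun y : ℝ => Real.Gamma (y + 1))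
        (1 * Real.Gamma x + x * deriv Real.Gamma x) x := by
      apply h2.congr_of_eventuallyEq
      filter_upwards [eventually_gt_nhds hx] with y hy
      rw [Real.Gamma_add_one hy.ne']
    have h3' : HasDerivAt (fun y : ℝ => Real.Gamma (y + 1))
        (1 * Real.Gamma x + x * deriv Real.Gamma x) (id (x + 1) - 1) := by simpa using h3
    have h4 := h3'.comp (x + 1) ((hasDerivAt_id (x+1)).sub_const 1)
    simp only [mul_one, one_mul] at h4 ⊢
    convert h4 using 2
    rfl; rfl; funext y; simp
  rw [digamma, digamma, h1.deriv, Real.Gamma_add_one hx.ne']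
  field_simp
  ring

lemma deriv_logGamma {x : ℝ} (hx : 0 < x) : deriv (Real.log ∘ Real.Gamma) x = digamma x := by
  rw [Function.comp_def, deriv.log (diffGamma hx) (Real.Gamma_pos_of_pos hx).ne', digamma]

lemma digamma_le_log {x : ℝ} (hx : 0 < x) : digamma x ≤ Real.log x := by
  have hc := Real.convexOn_log_Gamma
  have hd : DifferentiableAt ℝ (Real.log ∘ Real.Gamma) x :=
    ((diffGamma hx).log (Real.Gamma_pos_of_pos hx).ne')
  have := hc.deriv_le_slope (mem_Ioi.2 hx) (mem_Ioi.2 (by linarith : (0:ℝ) < x + 1))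
    (by linarith) hd
  rw [deriv_logGamma hx] at this
  refine this.trans_eq ?_
  rw [slope_def_field, Function.comp_apply, Function.comp_apply,
    Real.Gamma_add_one hx.ne', Real.log_mul hx.ne' (Real.Gamma_pos_of_pos hx).ne']
  field_simp
  ring

lemma log_le_digamma {x : ℝ} (hx : 0 < x) : Real.log x ≤ digamma (x + 1) := by
  have hc := Real.convexOn_log_Gamma
  have hd : DifferentiableAt ℝ (Real.log ∘ Real.Gamma) (x + 1) :=
    ((diffGamma (by linarith)).log (Real.Gamma_pos_of_pos (by linarith)).ne')
  have := hc.slope_le_deriv (mem_Ioi.2 hx) (mem_Ioi.2 (by linarith : (0:ℝ) < x + 1))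
    (by linarith) hd
  rw [deriv_logGamma (by linarith : (0:ℝ) < x + 1)] at this
  refine le_trans ?_ this
  rw [slope_def_field, Function.comp_apply, Function.comp_apply,
    Real.Gamma_add_one hx.ne', Real.log_mul hx.ne' (Real.Gamma_pos_of_pos hx).ne']
  field_simp
  apply le_of_eq; ring

lemma tendsto_cast_add_atTop (b : ℝ) :
    Tendsto (fun N : ℕ => b + (N : ℝ)) atTop atTop :=
  tendsto_atTop_add_const_left _ b tendsto_natCast_atTop_atTop

lemma tendsto_inv_cast_add (b : ℝ) :
    Tendsto (fun N : ℕ => (b + (N : ℝ))⁻¹) atTop (𝓝 0) :=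
  (tendsto_cast_add_atTop b).inv_tendsto_atTop

lemma tendsto_log_sub (a b : ℝ) :
    Tendsto (fun N : ℕ => Real.log (a + N) - Real.log (b + N)) atTop (𝓝 0) := by
  have hb := (tendsto_cast_add_atTop b).eventually_gt_atTop 0
  have ha := (tendsto_cast_add_atTop a).eventually_gt_atTop 0
  have h1 : Tendsto (fun N : ℕ => (a + N) / (b + N)) atTop (𝓝 1) := by
    have h2 : Tendsto (fun N : ℕ => 1 + (a - b) * (b + (N:ℝ))⁻¹) atTop (𝓝 (1 + (a-b)*0)) :=
      tendsto_const_nhds.add ((tendsto_inv_cast_add b).const_mul (a-b))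
    rw [mul_zero, add_zero] at h2
    apply h2.congr'
    filter_upwards [hb] with N hN
    field_simp
    ring
  have h3 : Tendsto (fun N : ℕ => Real.log ((a + N) / (b + N))) atTop (𝓝 0) := by
    have := ((Real.continuousAt_log one_ne_zero).tendsto).comp h1
    simpa [Function.comp_def] using this
  apply h3.congr'
  filter_upwards [ha, hb] with N hNa hNb
  rw [Real.log_div hNa.ne' hNb.ne']

lemma main_aux (x : ℝ) (hx : 1 ≤ x) (p : ℝ) (hp : 0 < p) (hp1 : p ≠ 1) :
    1 / x + p / (x + p) + digamma x - digamma (x + p + 1) ≠ 0 := by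
  have hx0 : 0 < x := lt_of_lt_of_le one_pos hx
  set f : ℝ := 1 / x + p / (x + p) + digamma x - digamma (x + p + 1) with hf
  set C : ℕ → ℝ := fun N => ∑ k ∈ Finset.range N,
    1 / ((x + p + k) * (x + k + 1) * (x + p + k + 1)) with hC
  set E : ℕ → ℝ := fun N =>
    1 / (x + N) + (p - 1) / (x + p + N) - digamma (x + p + N) + digamma (x + N) with hE
  have key : ∀ N : ℕ, E N = f + p * (p - 1) * C N := by
    intro N
    induction N with
    | zero =>
      simp only [hE, hC, hf, Finset.range_zero, Finset.sum_empty, Nat.cast_zero, add_zero,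
        mul_zero]
      rw [digamma_add_one (by positivity : (0:ℝ) < x + p)]
      have hxp : x + p ≠ 0 := by positivity
      field_simp
      ring
    | succ N ih =>
      have e1 : x + p + (N + 1 : ℕ) = (x + p + N) + 1 := by push_cast; ring
      have e2 : x + (N + 1 : ℕ) = (x + N) + 1 := by push_cast; ring
      simp only [hE, hC, Finset.sum_range_succ, e1, e2]
      rw [digamma_add_one (by positivity : (0:ℝ) < x + p + N),
        digamma_add_one (by positivity : (0:ℝ) < x + N)]
      simp only [hE, hC] at ih
      have d1 : x + (N:ℝ) ≠ 0 := by positivity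
      have d2 : x + p + (N:ℝ) ≠ 0 := by positivity
      have d3 : x + (N:ℝ) + 1 ≠ 0 := by positivity
      have d4 : x + p + (N:ℝ) + 1 ≠ 0 := by positivity
      have alg : 1/(x+(N:ℝ)+1) + (p-1)/(x+p+(N:ℝ)+1) - 1/(x+p+(N:ℝ)) + 1/(x+(N:ℝ))
          = 1/(x+(N:ℝ)) + (p-1)/(x+p+(N:ℝ))
            + p*(p-1)*(1/((x+p+(N:ℝ))*(x+(N:ℝ)+1)*(x+p+(N:ℝ)+1))) := by
        field_simp
        ring
      linarith [ih, alg]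
  -- E tends to 0
  have hEten : Tendsto E atTop (𝓝 0) := by
    have hA : Tendsto (fun N : ℕ => 1 / (x + (N:ℝ))) atTop (𝓝 0) := by
      simpa [one_div] using tendsto_inv_cast_add x
    have hB : Tendsto (fun N : ℕ => (p - 1) / (x + p + (N:ℝ))) atTop (𝓝 0) := by
      have := (tendsto_inv_cast_add (x + p)).const_mul (p - 1)
      simpa [div_eq_mul_inv, mul_zero] using this
    have hD : Tendsto (fun N : ℕ => digamma (x + (N:ℝ)) - digamma (x + p + (N:ℝ)))
        atTop (𝓝 0) := by
      apply tendsto_of_tendsto_of_tendsto_of_le_of_le'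
        (tendsto_log_sub (x - 1) (x + p)) (tendsto_log_sub x (x + p - 1))
      · filter_upwards [eventually_ge_atTop 1] with N hN
        have hN1 : (1:ℝ) ≤ N := by exact_mod_cast hN
        have l1 : Real.log (x - 1 + N) ≤ digamma (x + N) := by
          have h0 : (0:ℝ) < x - 1 + N := by linarith
          have := log_le_digamma h0
          have e : x - 1 + (N:ℝ) + 1 = x + N := by ring
          rwa [e] at this
        have l2 : digamma (x + p + N) ≤ Real.log (x + p + N) :=
          digamma_le_log (by positivity)
        linarith
      · filter_upwards [eventually_ge_atTop 1] with N hN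
        have hN1 : (1:ℝ) ≤ N := by exact_mod_cast hN
        have l1 : digamma (x + N) ≤ Real.log (x + N) := digamma_le_log (by positivity)
        have l2 : Real.log (x + p - 1 + N) ≤ digamma (x + p + N) := by
          have h0 : (0:ℝ) < x + p - 1 + N := by linarith
          have := log_le_digamma h0
          have e : x + p - 1 + (N:ℝ) + 1 = x + p + N := by ring
          rwa [e] at this
        linarith
    have := (hA.add hB).add hD
    rw [add_zero, add_zero] at this
    apply this.congr
    intro N
    simp only [hE]
    ring
  -- conclude
  intro h
  rw [h] at key
  simp only [zero_add] at key
  set c0 : ℝ := 1 / ((x + p) * (x + 1) * (x + p + 1)) with hc0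
  have hc0pos : 0 < c0 := by positivity
  have habs : 0 < |p * (p - 1)| := by
    rw [abs_pos]
    exact mul_ne_zero hp.ne' (sub_ne_zero.2 hp1)
  have hlow : ∀ N : ℕ, 1 ≤ N → |p * (p - 1)| * c0 ≤ |E N| := by
    intro N hN
    rw [key N, abs_mul (p * (p - 1)) (C N)]
    have hCN : c0 ≤ C N := by
      have h0mem : 0 ∈ Finset.range N := Finset.mem_range.2 hN
      have := Finset.single_le_sum
        (f := fun k : ℕ => 1 / ((x + p + k) * (x + k + 1) * (x + p + k + 1)))
        (fun k _ => by positivity) h0mem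
      simpa [hC, hc0] using this
    have hCpos : 0 ≤ C N := le_trans hc0pos.le hCN
    rw [abs_of_nonneg hCpos]
    exact mul_le_mul_of_nonneg_left hCN (abs_nonneg _)
  obtain ⟨M, hM⟩ := Metric.tendsto_atTop.mp hEten (|p * (p - 1)| * c0) (by positivity)
  have h1 := hM (max M 1) (le_max_left _ _)
  have h2 := hlow (max M 1) (le_max_right _ _)
  rw [Real.dist_eq, sub_zero] at h1
  linarith

/-- For every integer `n ≥ 1` and every real `p > 0` with `p ≠ 1`, one has
`1/n + p/(n+p) + ψ(n) − ψ(n+p+1) ≠ 0`. -/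
theorem digamma_combination_ne_zero (n : ℕ) (hn : 1 ≤ n) (p : ℝ) (hp : 0 < p)
    (hp1 : p ≠ 1) :
    1 / (n : ℝ) + p / ((n : ℝ) + p) + digamma n - digamma ((n : ℝ) + p + 1) ≠ 0 :=
  main_aux n (by exact_mod_cast hn) p hp hp1
end

section
/- Fix an integer n ≥ 1 and a real number p > 0, and define F : (0,∞) × (0,∞) → ℝ by F(a,b) = (b/a)^{(np+n)/(n+p)} · ((b+1)/(a+1))^{p/(n+p)} · B(p+1, (b+1)n/a) − B(p+1, (a+1)n/a)^{p/(n+p)} · B(p+1, (b+1)n/b)^{n/(n+p)}. Then the partial derivative of F with respect to b at the point (1,1) equals ((2n² + np)·B(p+1, 2n)/(n+p)) · [1/(2n) + p/(2n+p) + ψ(2n) − ψ(2n+p+1)]. -/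
/-- The Beta function `B(x,y) = ∫₀¹ t^(x-1) (1-t)^(y-1) dt`. -/
noncomputable def Beta (x y : ℝ) : ℝ := ∫ t in (0:ℝ)..1, t ^ (x - 1) * (1 - t) ^ (y - 1)

lemma Beta_eq {x y : ℝ} (hx : 0 < x) (hy : 0 < y) :
    Beta x y = Real.Gamma x * Real.Gamma y / Real.Gamma (x + y) := by
  have h := Complex.Gamma_mul_Gamma_eq_betaIntegral (s := (x:ℂ)) (t := (y:ℂ)) (by simpa) (by simpa)
  have hB : Complex.betaIntegral x y = (Beta x y : ℂ) := by
    unfold Complex.betaIntegral Beta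
    rw [← intervalIntegral.integral_ofReal]
    refine intervalIntegral.integral_congr fun t ht => ?_
    rw [Set.uIcc_of_le zero_le_one] at ht
    rw [show ((x:ℂ)-1) = ((x-1:ℝ):ℂ) by push_cast; ring,
      show ((y:ℂ)-1) = ((y-1:ℝ):ℂ) by push_cast; ring,
      show ((1:ℂ) - (t:ℂ)) = ((1-t:ℝ):ℂ) by push_cast; ring,
      ← Complex.ofReal_cpow ht.1, ← Complex.ofReal_cpow (by linarith [ht.2]), ← Complex.ofReal_mul]
  rw [hB, ← Complex.ofReal_add, Complex.Gamma_ofReal, Complex.Gamma_ofReal, Complex.Gamma_ofReal,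
    ← Complex.ofReal_mul, ← Complex.ofReal_mul] at h
  have h2 := Complex.ofReal_injective h
  have hne : Real.Gamma (x + y) ≠ 0 := (Real.Gamma_pos_of_pos (by linarith)).ne'
  field_simp
  linarith [h2]

lemma hasDerivAt_Gamma {y : ℝ} (hy : 0 < y) : HasDerivAt Real.Gamma (deriv Real.Gamma y) y := by
  refine (Real.differentiableAt_Gamma ?_).hasDerivAt
  intro m
  have : (0:ℝ) ≤ m := Nat.cast_nonneg m
  intro h; rw [h] at hy; linarith

lemma hasDerivAt_Beta {x : ℝ} (hx : 0 < x) {y : ℝ} (hy : 0 < y) :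
    HasDerivAt (fun z => Beta x z) (Beta x y * (digamma y - digamma (x + y))) y := by
  have hGy : (0:ℝ) < Real.Gamma y := Real.Gamma_pos_of_pos hy
  have hGxy : (0:ℝ) < Real.Gamma (x + y) := Real.Gamma_pos_of_pos (by linarith)
  have h1 : HasDerivAt (fun z => Real.Gamma x * Real.Gamma z)
      (Real.Gamma x * deriv Real.Gamma y) y := (hasDerivAt_Gamma hy).const_mul _
  have h2 : HasDerivAt (fun z => Real.Gamma (x + z)) (deriv Real.Gamma (x + y)) y := by
    have := (hasDerivAt_Gamma (y := x + y) (by linarith)).comp y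
      ((hasDerivAt_id y).const_add x)
    simpa [Function.comp_def] using this
  have h3 := h1.div h2 hGxy.ne'
  have heq : ∀ᶠ z in nhds y, Beta x z = Real.Gamma x * Real.Gamma z / Real.Gamma (x + z) := by
    filter_upwards [eventually_gt_nhds hy] with z hz using Beta_eq hx hz
  refine HasDerivAt.congr_of_eventuallyEq ?_ heq
  convert h3 using 1
  · rfl
  · rfl
  rw [Beta_eq hx hy]
  unfold digamma
  field_simp

lemma Beta_pos {x y : ℝ} (hx : 0 < x) (hy : 0 < y) : 0 < Beta x y := by
  rw [Beta_eq hx hy]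
  exact div_pos (mul_pos (Real.Gamma_pos_of_pos hx) (Real.Gamma_pos_of_pos hy))
    (Real.Gamma_pos_of_pos (by linarith))


/-- For `n ≥ 1`, `p > 0` and `F(a,b) = (b/a)^{(np+n)/(n+p)}·((b+1)/(a+1))^{p/(n+p)}·
B(p+1,(b+1)n/a) − B(p+1,(a+1)n/a)^{p/(n+p)}·B(p+1,(b+1)n/b)^{n/(n+p)}`, the partial
derivative of `F` with respect to `b` at `(1,1)` equals
`((2n²+np)·B(p+1,2n)/(n+p))·[1/(2n) + p/(2n+p) + ψ(2n) − ψ(2n+p+1)]`. -/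
theorem partial_deriv_F_at_one_one (n : ℕ) (hn : 1 ≤ n) (p : ℝ) (hp : 0 < p)
    (F : ℝ → ℝ → ℝ)
    (hF : ∀ a b : ℝ, 0 < a → 0 < b →
      F a b = (b / a) ^ (((n : ℝ) * p + n) / ((n : ℝ) + p)) *
          ((b + 1) / (a + 1)) ^ (p / ((n : ℝ) + p)) * Beta (p + 1) ((b + 1) * n / a) -
        Beta (p + 1) ((a + 1) * n / a) ^ (p / ((n : ℝ) + p)) *
          Beta (p + 1) ((b + 1) * n / b) ^ ((n : ℝ) / ((n : ℝ) + p))) :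
    HasDerivAt (fun b => F 1 b)
      ((2 * (n : ℝ) ^ 2 + n * p) * Beta (p + 1) (2 * n) / ((n : ℝ) + p) *
        (1 / (2 * (n : ℝ)) + p / (2 * (n : ℝ) + p) +
          digamma (2 * n) - digamma (2 * (n : ℝ) + p + 1))) 1 := by
  have hc : (1:ℝ) ≤ (n:ℝ) := by exact_mod_cast hn
  set c : ℝ := (n:ℝ) with hcdef
  have hc0 : 0 < c := by linarith
  have hcp : 0 < c + p := by linarith
  set α : ℝ := (c * p + c) / (c + p) with hα
  set β : ℝ := p / (c + p) with hβ
  set γ : ℝ := c / (c + p) with hγ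
  have hx : (0:ℝ) < p + 1 := by linarith
  have h2c : (0:ℝ) < 2 * c := by linarith
  have hBpos : 0 < Beta (p + 1) (2 * c) := Beta_pos hx h2c
  set B : ℝ := Beta (p + 1) (2 * c) with hBdef
  set G : ℝ → ℝ := fun b => b ^ α * ((b + 1) / 2) ^ β * Beta (p + 1) ((b + 1) * c) -
      B ^ β * (Beta (p + 1) ((b + 1) * c / b)) ^ γ with hG
  have heq : ∀ᶠ b in nhds (1:ℝ), F 1 b = G b := by
    filter_upwards [eventually_gt_nhds (show (0:ℝ) < 1 by norm_num)] with b hb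
    rw [hF 1 b one_pos hb, hG]
    norm_num
    exact Or.inl rfl
  -- derivative pieces
  have hf : HasDerivAt (fun b : ℝ => b ^ α) α 1 := by
    simpa using Real.hasDerivAt_rpow_const (x := (1:ℝ)) (p := α) (Or.inl one_ne_zero)
  have hg : HasDerivAt (fun b : ℝ => ((b + 1) / 2) ^ β) (β / 2) 1 := by
    have h1 : HasDerivAt (fun b : ℝ => (b + 1) / 2) (1 / 2) 1 := by
      simpa using (((hasDerivAt_id (1:ℝ)).add_const 1).div_const 2)
    have := h1.rpow_const (p := β) (Or.inl (by norm_num))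
    norm_num at this
    convert this using 1
    norm_num
    ring
  have hh : HasDerivAt (fun b : ℝ => Beta (p + 1) ((b + 1) * c))
      (B * (digamma (2 * c) - digamma (2 * c + p + 1)) * c) 1 := by
    have hu : HasDerivAt (fun b : ℝ => (b + 1) * c) c 1 := by
      simpa using ((hasDerivAt_id (1:ℝ)).add_const 1).mul_const c
    have hb := (hasDerivAt_Beta hx (y := (1 + 1) * c) (by linarith)).comp
      (h := fun b : ℝ => (b + 1) * c) 1 hu
    rw [show ((1:ℝ) + 1) * c = 2 * c by ring, show p + 1 + 2 * c = 2 * c + p + 1 by ring] at hb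
    exact hb
  have hv : HasDerivAt (fun b : ℝ => (b + 1) * c / b) (-c) 1 := by
    have h1 : HasDerivAt (fun b : ℝ => (b + 1) * c) c 1 := by
      simpa using ((hasDerivAt_id (1:ℝ)).add_const 1).mul_const c
    have := h1.div (hasDerivAt_id (1:ℝ)) one_ne_zero
    convert this using 1
    · rfl
    · rfl
    · rfl
    norm_num
    ring
  have hk : HasDerivAt (fun b : ℝ => (Beta (p + 1) ((b + 1) * c / b)) ^ γ)
      (B * (digamma (2 * c) - digamma (2 * c + p + 1)) * (-c) * γ * B ^ (γ - 1)) 1 := by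
    have hb := (hasDerivAt_Beta hx (y := (1 + 1) * c / 1) (by rw [div_one]; linarith)).comp
      (h := fun b : ℝ => (b + 1) * c / b) 1 hv
    rw [show ((1:ℝ) + 1) * c / 1 = 2 * c by ring,
      show p + 1 + 2 * c = 2 * c + p + 1 by ring] at hb
    have h2 := hb.rpow_const (p := γ)
      (Or.inl (by show Beta (p + 1) (((1:ℝ) + 1) * c / 1) ≠ 0
                  rw [show ((1:ℝ) + 1) * c / 1 = 2 * c by ring]; exact hBpos.ne'))
    simp only [Function.comp_apply] at h2
    rw [show ((1:ℝ) + 1) * c / 1 = 2 * c by ring] at h2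
    exact h2
  have total := ((hf.mul hg).mul hh).sub (hk.const_mul (B ^ β))
  refine HasDerivAt.congr_of_eventuallyEq ?_ heq
  rw [hG]
  convert total using 1
  · rfl
  have h2cp : (0:ℝ) < 2 * c + p := by linarith
  have hpow : B ^ β * B ^ (γ - 1) = 1 := by
    have hβγ : β + (γ - 1) = 0 := by rw [hβ, hγ]; field_simp; ring
    rw [← Real.rpow_add hBpos, hβγ, Real.rpow_zero]
  norm_num
  rw [← hBdef]
  rw [show B ^ β * (B * (digamma (2 * c) - digamma (2 * c + p + 1)) * c * γ * B ^ (γ - 1)) =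
      (B ^ β * B ^ (γ - 1)) * (B * (digamma (2 * c) - digamma (2 * c + p + 1)) * c * γ) by ring,
    hpow, one_mul]
  set d1 := digamma (2 * c)
  set d2 := digamma (2 * c + p + 1)
  rw [hα, hβ, hγ]
  field_simp
  ring
end

section
/- Fix an integer n ≥ 1 and a real number p > 0 with p ≠ 1, and define F : (0,∞) × (0,∞) → ℝ by F(a,b) = (b/a)^{(np+n)/(n+p)} · ((b+1)/(a+1))^{p/(n+p)} · B(p+1, (b+1)n/a) − B(p+1, (a+1)n/a)^{p/(n+p)} · B(p+1, (b+1)n/b)^{n/(n+p)}. Then F(1,1) = 0 and the partial derivative of F with respect to b at the point (1,1) is nonzero. -/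
open Real MeasureTheory Set Filter intervalIntegral
open scoped Topology

noncomputable def Aint (p : ℝ) (k : ℕ) : ℝ := ∫ t in (0:ℝ)..1, t ^ k * (1 - t) ^ p

lemma cont_rpow_const {p : ℝ} (hp : 0 < p) : Continuous fun x : ℝ => x ^ p :=
  continuous_iff_continuousAt.2 fun x => Real.continuousAt_rpow_const x p (Or.inr hp.le)

lemma cont_one_sub_rpow {p : ℝ} (hp : 0 < p) : Continuous fun t : ℝ => (1 - t) ^ p :=
  (cont_rpow_const hp).comp (continuous_const.sub continuous_id)

lemma cont_A {p : ℝ} (hp : 0 < p) (k : ℕ) :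
    Continuous fun t : ℝ => t ^ k * (1 - t) ^ p :=
  (continuous_pow k).mul (cont_one_sub_rpow hp)

lemma hasDerivAt_one_sub_rpow {q : ℝ} {x : ℝ} (hx : x < 1) :
    HasDerivAt (fun t : ℝ => (1 - t) ^ q) (-(q * (1 - x) ^ (q - 1))) x := by
  have h1 : HasDerivAt (fun t : ℝ => 1 - t) (-1) x := (hasDerivAt_id x).const_sub 1
  have h2 : HasDerivAt (fun y : ℝ => y ^ q) (q * (1 - x) ^ (q - 1)) (1 - x) :=
    Real.hasDerivAt_rpow_const (Or.inl (by linarith))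
  simpa [mul_comm, Function.comp_def] using h2.comp x h1

lemma ftc_core {p : ℝ} (hp : 0 < p) (k : ℕ) :
    ∫ t in (0:ℝ)..1, (((k:ℝ)+1) * t ^ k * (1-t) ^ (p+1) - (p+1) * t ^ (k+1) * (1-t) ^ p) = 0 := by
  have key := integral_eq_sub_of_hasDeriv_right_of_le (a := (0:ℝ)) (b := 1)
    (f := fun t : ℝ => t ^ (k+1) * (1-t) ^ (p+1))
    (f' := fun t : ℝ => ((k:ℝ)+1) * t ^ k * (1-t) ^ (p+1) - (p+1) * t ^ (k+1) * (1-t) ^ p)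
    (by norm_num)
    (((continuous_pow (k+1)).mul (cont_one_sub_rpow (by linarith))).continuousOn)
    (fun x hx => by
      have hd : HasDerivAt (fun t : ℝ => t ^ (k+1) * (1-t) ^ (p+1))
          (((k:ℝ)+1) * x ^ k * (1-x) ^ (p+1) - (p+1) * x ^ (k+1) * (1-x) ^ p) x := by
        have := (hasDerivAt_pow (k+1) x).mul (hasDerivAt_one_sub_rpow (q := p+1) hx.2)
        refine this.congr_deriv ?_
        symm
        push_cast
        rw [show p + 1 - 1 = p by ring]
        ring
      exact hd.hasDerivWithinAt)
    (by
      apply Continuous.intervalIntegrable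
      have c1 : Continuous fun t : ℝ => ((k:ℝ)+1) * t ^ k * (1-t) ^ (p+1) :=
        (continuous_const.mul (continuous_pow k)).mul (cont_one_sub_rpow (by linarith))
      have c2 : Continuous fun t : ℝ => (p+1) * t ^ (k+1) * (1-t) ^ p :=
        (continuous_const.mul (continuous_pow (k+1))).mul (cont_one_sub_rpow hp)
      exact c1.sub c2)
  rw [key]
  have h1 : ((0:ℝ)) ^ (p+1) = 0 := Real.zero_rpow (by linarith)
  have h0 : ((0:ℝ)) ^ (k+1) = 0 := by simp
  simp [h1, h0]

lemma Asub {p : ℝ} (hp : 0 < p) (k : ℕ) :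
    ∫ t in (0:ℝ)..1, t ^ k * (1-t) ^ (p+1) = Aint p k - Aint p (k+1) := by
  have : ∫ t in (0:ℝ)..1, t ^ k * (1-t) ^ (p+1)
      = ∫ t in (0:ℝ)..1, (t ^ k * (1-t) ^ p - t ^ (k+1) * (1-t) ^ p) := by
    apply intervalIntegral.integral_congr
    intro t ht
    rw [uIcc_of_le (by norm_num : (0:ℝ) ≤ 1)] at ht
    simp only
    rcases eq_or_lt_of_le ht.2 with h1 | h1
    · subst h1
      rw [show (1:ℝ) - 1 = 0 by ring, Real.zero_rpow (by linarith), Real.zero_rpow (by linarith)]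
      ring
    · rw [Real.rpow_add_one (by linarith : (1:ℝ) - t ≠ 0)]
      ring
  rw [this, intervalIntegral.integral_sub ((cont_A hp k).intervalIntegrable 0 1)
    ((cont_A hp (k+1)).intervalIntegrable 0 1)]
  rfl

lemma ftcA {p : ℝ} (hp : 0 < p) (k : ℕ) :
    ((k:ℝ)+1) * (Aint p k - Aint p (k+1)) = (p+1) * Aint p (k+1) := by
  have h := ftc_core hp k
  have i1 : IntervalIntegrable (fun t : ℝ => ((k:ℝ)+1) * t ^ k * (1-t) ^ (p+1)) volume 0 1 :=
    ((continuous_const.mul (continuous_pow k)).mul (cont_one_sub_rpow (by linarith))).intervalIntegrable 0 1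
  have i2 : IntervalIntegrable (fun t : ℝ => (p+1) * t ^ (k+1) * (1-t) ^ p) volume 0 1 :=
    ((continuous_const.mul (continuous_pow (k+1))).mul (cont_one_sub_rpow hp)).intervalIntegrable 0 1
  rw [intervalIntegral.integral_sub i1 i2] at h
  have e1 : (∫ t in (0:ℝ)..1, ((k:ℝ)+1) * t ^ k * (1-t) ^ (p+1))
      = ((k:ℝ)+1) * (Aint p k - Aint p (k+1)) := by
    rw [← Asub hp k, ← intervalIntegral.integral_const_mul]
    apply intervalIntegral.integral_congr; intro t _; simp only; ring
  have e2 : (∫ t in (0:ℝ)..1, (p+1) * t ^ (k+1) * (1-t) ^ p) = (p+1) * Aint p (k+1) := by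
    show _ = (p+1) * ∫ t in (0:ℝ)..1, t ^ (k+1) * (1-t) ^ p
    rw [← intervalIntegral.integral_const_mul]
    apply intervalIntegral.integral_congr; intro t _; simp only; ring
  rw [e1, e2] at h
  linarith

noncomputable def Cint (p : ℝ) (k : ℕ) : ℝ := ∫ t in (0:ℝ)..1, t ^ k * (1 - t) ^ p * (-Real.log t)

lemma cont_pow_log {k : ℕ} (hk : 1 ≤ k) : Continuous fun t : ℝ => t ^ k * (-Real.log t) := by
  have : (fun t : ℝ => t ^ k * (-Real.log t)) = fun t : ℝ => -(t ^ (k-1) * (t * Real.log t)) := by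
    funext t
    have : t ^ k = t ^ (k-1) * t := by
      conv_lhs => rw [show k = (k-1) + 1 by omega]
      rw [pow_succ]
    rw [this]; ring
  rw [this]
  exact ((continuous_pow (k-1)).mul Real.continuous_mul_log).neg

lemma cont_C {p : ℝ} (hp : 0 < p) {k : ℕ} (hk : 1 ≤ k) :
    Continuous fun t : ℝ => t ^ k * (1 - t) ^ p * (-Real.log t) := by
  have : (fun t : ℝ => t ^ k * (1 - t) ^ p * (-Real.log t))
      = fun t : ℝ => (t ^ k * (-Real.log t)) * (1 - t) ^ p := by funext t; ring
  rw [this]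
  exact (cont_pow_log hk).mul (cont_one_sub_rpow hp)

lemma Aint_pos {p : ℝ} (hp : 0 < p) (k : ℕ) : 0 < Aint p k := by
  apply intervalIntegral_pos_of_pos_on ((cont_A hp k).intervalIntegrable 0 1)
  · intro t ht
    exact mul_pos (pow_pos ht.1 k) (Real.rpow_pos_of_pos (by linarith [ht.2]) p)
  · norm_num

lemma Cint_nonneg {p : ℝ} (hp : 0 < p) (k : ℕ) : 0 ≤ Cint p k := by
  apply intervalIntegral.integral_nonneg (by norm_num)
  intro t ht
  have h0 : (0:ℝ) ≤ t := ht.1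
  have h1 : t ≤ 1 := ht.2
  have : Real.log t ≤ 0 := Real.log_nonpos h0 h1
  have hl : 0 ≤ -Real.log t := by linarith
  have := Real.rpow_nonneg (by linarith : (0:ℝ) ≤ 1 - t) p
  positivity

lemma ftcC_core {p : ℝ} (hp : 0 < p) {k : ℕ} (hk : 1 ≤ k) :
    ∫ t in (0:ℝ)..1, (((k:ℝ)+1) * (t ^ k * (1-t) ^ (p+1) * (-Real.log t))
      - (p+1) * (t ^ (k+1) * (1-t) ^ p * (-Real.log t)) - t ^ k * (1-t) ^ (p+1)) = 0 := by
  have key := integral_eq_sub_of_hasDeriv_right_of_le (a := (0:ℝ)) (b := 1)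
    (f := fun t : ℝ => t ^ (k+1) * (1-t) ^ (p+1) * (-Real.log t))
    (f' := fun t : ℝ => ((k:ℝ)+1) * (t ^ k * (1-t) ^ (p+1) * (-Real.log t))
      - (p+1) * (t ^ (k+1) * (1-t) ^ p * (-Real.log t)) - t ^ k * (1-t) ^ (p+1))
    (by norm_num)
    ((cont_C (by linarith) (by omega)).continuousOn)
    (fun x hx => by
      have hd : HasDerivAt (fun t : ℝ => t ^ (k+1) * (1-t) ^ (p+1) * (-Real.log t))
          (((k:ℝ)+1) * (x ^ k * (1-x) ^ (p+1) * (-Real.log x))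
            - (p+1) * (x ^ (k+1) * (1-x) ^ p * (-Real.log x)) - x ^ k * (1-x) ^ (p+1)) x := by
        have ha := (hasDerivAt_pow (k+1) x).mul (hasDerivAt_one_sub_rpow (q := p+1) hx.2)
        have hb : HasDerivAt (fun t : ℝ => -Real.log t) (-x⁻¹) x :=
          (Real.hasDerivAt_log (ne_of_gt hx.1)).neg
        have := ha.mul hb
        refine this.congr_deriv ?_
        symm
        simp only [Pi.mul_apply]
        push_cast
        rw [show p + 1 - 1 = p by ring]
        have hx0 : x ≠ 0 := ne_of_gt hx.1
        field_simp
        ring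
      exact hd.hasDerivWithinAt)
    (by
      apply Continuous.intervalIntegrable
      exact ((continuous_const.mul (cont_C (by linarith) hk)).sub
        (continuous_const.mul (cont_C hp (by omega)))).sub (cont_A (by linarith) k))
  rw [key]
  have h1 : ((0:ℝ)) ^ (p+1) = 0 := Real.zero_rpow (by linarith)
  simp [h1]

lemma Csub {p : ℝ} (hp : 0 < p) {k : ℕ} (hk : 1 ≤ k) :
    ∫ t in (0:ℝ)..1, t ^ k * (1-t) ^ (p+1) * (-Real.log t) = Cint p k - Cint p (k+1) := by
  have : ∫ t in (0:ℝ)..1, t ^ k * (1-t) ^ (p+1) * (-Real.log t)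
      = ∫ t in (0:ℝ)..1, (t ^ k * (1-t) ^ p * (-Real.log t) - t ^ (k+1) * (1-t) ^ p * (-Real.log t)) := by
    apply intervalIntegral.integral_congr
    intro t ht
    rw [uIcc_of_le (by norm_num : (0:ℝ) ≤ 1)] at ht
    simp only
    rcases eq_or_lt_of_le ht.2 with h1 | h1
    · subst h1
      rw [show (1:ℝ) - 1 = 0 by ring, Real.zero_rpow (by linarith), Real.zero_rpow (by linarith)]
      ring
    · rw [Real.rpow_add_one (by linarith : (1:ℝ) - t ≠ 0)]
      ring
  rw [this]
  rw [intervalIntegral.integral_sub ((cont_C hp hk).intervalIntegrable 0 1)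
    ((cont_C hp (by omega)).intervalIntegrable 0 1)]
  rfl

lemma ftcC {p : ℝ} (hp : 0 < p) {k : ℕ} (hk : 1 ≤ k) :
    ((k:ℝ)+1) * (Cint p k - Cint p (k+1))
      = (p+1) * Cint p (k+1) + (Aint p k - Aint p (k+1)) := by
  have h := ftcC_core hp hk
  have i1 : IntervalIntegrable (fun t : ℝ => ((k:ℝ)+1) * (t ^ k * (1-t) ^ (p+1) * (-Real.log t))) volume 0 1 :=
    (continuous_const.mul (cont_C (by linarith) hk)).intervalIntegrable 0 1
  have i2 : IntervalIntegrable (fun t : ℝ => (p+1) * (t ^ (k+1) * (1-t) ^ p * (-Real.log t))) volume 0 1 :=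
    (continuous_const.mul (cont_C hp (by omega))).intervalIntegrable 0 1
  have i3 : IntervalIntegrable (fun t : ℝ => t ^ k * (1-t) ^ (p+1)) volume 0 1 :=
    (cont_A (by linarith) k).intervalIntegrable 0 1
  have e : ∫ t in (0:ℝ)..1, (((k:ℝ)+1) * (t ^ k * (1-t) ^ (p+1) * (-Real.log t))
      - (p+1) * (t ^ (k+1) * (1-t) ^ p * (-Real.log t)) - t ^ k * (1-t) ^ (p+1))
      = (∫ t in (0:ℝ)..1, ((k:ℝ)+1) * (t ^ k * (1-t) ^ (p+1) * (-Real.log t)))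
        - (∫ t in (0:ℝ)..1, (p+1) * (t ^ (k+1) * (1-t) ^ p * (-Real.log t)))
        - ∫ t in (0:ℝ)..1, t ^ k * (1-t) ^ (p+1) := by
    rw [intervalIntegral.integral_sub (i1.sub i2) i3, intervalIntegral.integral_sub i1 i2]
  rw [e] at h
  rw [intervalIntegral.integral_const_mul, intervalIntegral.integral_const_mul, Csub hp hk,
    Asub hp k] at h
  have e2 : (∫ t in (0:ℝ)..1, t ^ (k+1) * (1-t) ^ p * (-Real.log t)) = Cint p (k+1) := rfl
  rw [e2] at h
  linarith

lemma Cint_le {p : ℝ} (hp : 0 < p) {k : ℕ} (hk : 1 ≤ k) :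
    (k:ℝ) * Cint p k ≤ (p+1) * Aint p k := by
  obtain ⟨j, rfl⟩ : ∃ j, k = j + 1 := ⟨k - 1, by omega⟩
  have step1 : Cint p (j+1) ≤ ∫ t in (0:ℝ)..1, t ^ j * (1-t) ^ (p+1) := by
    apply intervalIntegral.integral_mono_on (by norm_num)
      ((cont_C hp (by omega)).intervalIntegrable 0 1)
      ((cont_A (by linarith) j).intervalIntegrable 0 1)
    intro t ht
    rcases eq_or_lt_of_le ht.1 with h0 | h0
    · rw [← h0]
      rw [show ((0:ℝ))^(j+1) = 0 by simp]
      rw [Real.log_zero]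
      have := Real.rpow_nonneg (by norm_num : (0:ℝ) ≤ 1 - 0) (p+1)
      simp only [neg_zero, mul_zero, zero_mul]
      positivity
    · have hlog : -Real.log t ≤ (1 - t)/t := by
        have h := Real.log_le_sub_one_of_pos (show (0:ℝ) < 1/t by positivity)
        rw [Real.log_div one_ne_zero (ne_of_gt h0), Real.log_one] at h
        have : 0 - Real.log t ≤ 1/t - 1 := h
        rw [div_sub' (ne_of_gt h0)] at this
        calc -Real.log t = 0 - Real.log t := by ring
          _ ≤ (1 - t*1)/t := this
          _ = (1-t)/t := by ring
      have h1t : (0:ℝ) ≤ 1 - t := by linarith [ht.2]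
      have hrp : (0:ℝ) ≤ (1-t) ^ p := Real.rpow_nonneg h1t p
      have hlog0 : 0 ≤ -Real.log t := by
        have := Real.log_nonpos (le_of_lt h0) ht.2
        linarith
      rcases eq_or_lt_of_le ht.2 with h1 | h1
      · rw [h1]
        simp only [Real.log_one, neg_zero, mul_zero]
        rw [show (1:ℝ) - 1 = 0 by ring, Real.zero_rpow (by linarith : p + 1 ≠ 0)]
        simp
      calc t ^ (j+1) * (1-t) ^ p * (-Real.log t)
          ≤ t ^ (j+1) * (1-t) ^ p * ((1-t)/t) := by
            apply mul_le_mul_of_nonneg_left hlog (by positivity)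
        _ = t ^ j * ((1-t) ^ p * (1-t)) * (t/t) := by ring
        _ = t ^ j * (1-t) ^ (p+1) := by
            rw [div_self (ne_of_gt h0), Real.rpow_add_one (by intro hc; linarith : (1:ℝ) - t ≠ 0)]
            ring
  have step2 := ftcA hp j
  have step3 := Asub hp j
  rw [step3] at step1
  have hA := Aint_pos hp (j+1)
  push_cast
  nlinarith [Cint_nonneg hp (j+1)]

lemma Tstep {p : ℝ} (hp : 0 < p) {k : ℕ} (hk : 1 ≤ k) :
    Cint p k / Aint p k - Cint p (k+1) / Aint p (k+1)
      = 1/((k:ℝ)+1) - 1/((k:ℝ)+p+2) := by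
  have h1 := ftcA hp k
  have h2 := ftcC hp hk
  have hA := Aint_pos hp k
  have hA' := Aint_pos hp (k+1)
  have hd : ((k:ℝ)+p+2) ≠ 0 := by positivity
  have ha' : Aint p (k+1) = ((k:ℝ)+1) * Aint p k / ((k:ℝ)+p+2) := by
    field_simp
    linarith
  have hc' : Cint p (k+1) = (((k:ℝ)+1) * Cint p k - Aint p k + Aint p (k+1)) / ((k:ℝ)+p+2) := by
    field_simp
    linarith
  rw [hc', ha']
  field_simp
  ring

set_option maxHeartbeats 1000000 in
lemma key_alg (n J p : ℝ) (d1 : (0:ℝ) < 2*n+J) (d2 : (0:ℝ) < 2*n+J+1) (d3 : (0:ℝ) < 2*n+J+2) (d4 : (0:ℝ) < 2*n+J+p+1) :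
    n*(2*n+p)*(1/(2*n+J) - 1/(2*n+J+p+1)) - (1-p)*n*(2*n)/(2*n+J) + (1-p)*n*(2*n)/(2*n+J+1)
      - p*n*(2*n+1)*(1/(2*n+J) + 1/(2*n+J+1)) + p*n*(2*n+1)*(1/(2*n+J+1) + 1/(2*n+J+2))
      = n*(J+1)*p*(p-1)/((2*n+J+p+1)*(2*n+J+1)*(2*n+J+2)) := by
  have e1 : (2*n+J) ≠ 0 := ne_of_gt d1
  have e2 : (2*n+J+1) ≠ 0 := ne_of_gt d2
  have e3 : (2*n+J+2) ≠ 0 := ne_of_gt d3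
  have e4 : (2*n+J+p+1) ≠ 0 := ne_of_gt d4
  obtain ⟨J', rfl⟩ : ∃ J', J = J' - 2*n := ⟨2*n+J, by ring⟩
  simp only [show 2*n + (J' - 2*n) = J' by ring] at *
  field_simp
  ring


noncomputable def Tfun (p : ℝ) (k : ℕ) : ℝ := Cint p k / Aint p k

noncomputable def hterm (n : ℕ) (p : ℝ) (j : ℕ) : ℝ :=
  (n:ℝ)*((j:ℝ)+1)*p*(p-1)/((2*(n:ℝ)+j+p+1)*(2*(n:ℝ)+j+1)*(2*(n:ℝ)+j+2))

noncomputable def Rterm (n : ℕ) (p : ℝ) (J : ℕ) : ℝ :=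
  (n:ℝ)*(2*(n:ℝ)+p)*Tfun p (2*n-1+J) - (1-p)*(n:ℝ)*(2*(n:ℝ))/(2*(n:ℝ)+J)
    - p*(n:ℝ)*(2*(n:ℝ)+1)*(1/(2*(n:ℝ)+J) + 1/(2*(n:ℝ)+J+1))

lemma phi_ne_zero (n : ℕ) (hn : 1 ≤ n) {p : ℝ} (hp : 0 < p) (hp1 : p ≠ 1) :
    (n:ℝ)*(2*(n:ℝ)+p) * (Cint p (2*n-1) / Aint p (2*n-1)) - (n:ℝ)*(p+1) - p/2 ≠ 0 := by
  have hn0 : (0:ℝ) < n := by positivity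
  have hKc : ((2*n-1 : ℕ):ℝ) = 2*(n:ℝ) - 1 := by
    have h1 : (2*n-1) + 1 = 2*n := by omega
    have h2 := congrArg (Nat.cast : ℕ → ℝ) h1
    push_cast at h2
    linarith
  have hT : ∀ J : ℕ, Tfun p (2*n-1+J) - Tfun p (2*n-1+J+1)
      = 1/(2*(n:ℝ)+J) - 1/(2*(n:ℝ)+J+p+1) := by
    intro J
    have h := Tstep hp (k := 2*n-1+J) (by omega)
    have c1 : ((2*n-1+J : ℕ):ℝ) + 1 = 2*(n:ℝ) + J := by push_cast [hKc]; ring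
    have c2 : ((2*n-1+J : ℕ):ℝ) + p + 2 = 2*(n:ℝ) + J + p + 1 := by push_cast [hKc]; ring
    rw [c1, c2] at h
    exact h
  have hstep : ∀ J : ℕ, Rterm n p J - Rterm n p (J+1) = hterm n p J := by
    intro J
    have hTJ := hT J
    have key := key_alg (n:ℝ) (J:ℝ) p (by positivity) (by positivity) (by positivity)
      (by positivity)
    unfold Rterm hterm
    rw [show 2*n-1 + (J+1) = (2*n-1+J) + 1 by omega]
    push_cast
    linear_combination (norm := ring_nf) key + (n:ℝ)*(2*(n:ℝ)+p) * hTJ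
  have hR0 : Rterm n p 0 = (n:ℝ)*(2*(n:ℝ)+p) * Tfun p (2*n-1) - (n:ℝ)*(p+1) - p/2 := by
    unfold Rterm
    rw [show 2*n-1 + 0 = 2*n-1 by omega]
    push_cast
    have e2 : (2*(n:ℝ)) ≠ 0 := by positivity
    have e3 : (2*(n:ℝ)+1) ≠ 0 := by positivity
    field_simp
    ring
  have main : ∀ J : ℕ, (n:ℝ)*(2*(n:ℝ)+p) * Tfun p (2*n-1) - (n:ℝ)*(p+1) - p/2
      = (Finset.range J).sum (hterm n p) + Rterm n p J := by
    intro J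
    induction J with
    | zero => simp [hR0]
    | succ J ih =>
      rw [Finset.sum_range_succ]
      have := hstep J
      linarith
  have hTnonneg : ∀ k : ℕ, 0 ≤ Tfun p k := fun k =>
    div_nonneg (Cint_nonneg hp k) (Aint_pos hp k).le
  have hTle : ∀ k : ℕ, 1 ≤ k → Tfun p k ≤ (p+1)/(k:ℝ) := by
    intro k hk
    have h1 := Cint_le hp hk
    have hA := Aint_pos hp k
    have hkpos : (0:ℝ) < (k:ℝ) := by exact_mod_cast Nat.pos_of_ne_zero (by omega)
    unfold Tfun
    rw [div_le_div_iff₀ hA hkpos]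
    nlinarith
  show (n:ℝ)*(2*(n:ℝ)+p) * Tfun p (2*n-1) - (n:ℝ)*(p+1) - p/2 ≠ 0
  have tendstoD : ∀ c a : ℝ, Filter.Tendsto (fun J : ℕ => c/(a+(J:ℝ))) Filter.atTop (nhds 0) := by
    intro c a
    apply Filter.Tendsto.div_atTop tendsto_const_nhds
    exact tendsto_atTop_add_const_left _ a tendsto_natCast_atTop_atTop
  rcases lt_or_gt_of_ne hp1 with hplt | hpgt
  · -- p < 1 : Φ ≤ hterm 0 < 0
    have hhneg : ∀ j : ℕ, hterm n p j < 0 := by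
      intro j
      unfold hterm
      apply div_neg_of_neg_of_pos
      · have : (0:ℝ) < (n:ℝ)*((j:ℝ)+1)*p := by positivity
        nlinarith
      · positivity
    have hbound : ∀ J : ℕ, 1 ≤ J →
        (n:ℝ)*(2*(n:ℝ)+p) * Tfun p (2*n-1) - (n:ℝ)*(p+1) - p/2
          ≤ hterm n p 0 + (n:ℝ)*(2*(n:ℝ)+p)*(p+1)/(2*(n:ℝ)-1+(J:ℝ)) := by
      intro J hJ
      rw [main J]
      have hsum : (Finset.range J).sum (hterm n p) ≤ hterm n p 0 := by
        obtain ⟨J', rfl⟩ : ∃ J', J = J' + 1 := ⟨J - 1, by omega⟩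
        rw [Finset.sum_range_succ']
        have : (Finset.range J').sum (fun i => hterm n p (i+1)) ≤ 0 :=
          Finset.sum_nonpos fun i _ => (hhneg (i+1)).le
        linarith
      have hRle : Rterm n p J ≤ (n:ℝ)*(2*(n:ℝ)+p)*(p+1)/(2*(n:ℝ)-1+(J:ℝ)) := by
        unfold Rterm
        have hd0 : (0:ℝ) < 2*(n:ℝ)-1+(J:ℝ) := by
          have : (1:ℝ) ≤ (n:ℝ) := by exact_mod_cast hn
          linarith
        have hT1 : Tfun p (2*n-1+J) ≤ (p+1)/(2*(n:ℝ)-1+(J:ℝ)) := by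
          have h2 := hTle (2*n-1+J) (by omega)
          have c1 : ((2*n-1+J : ℕ):ℝ) = 2*(n:ℝ)-1+(J:ℝ) := by push_cast [hKc]; ring
          rwa [c1] at h2
        have c1 : (0:ℝ) ≤ (1-p)*(n:ℝ)*(2*(n:ℝ))/(2*(n:ℝ)+J) := by
          apply div_nonneg _ (by positivity)
          have : (0:ℝ) ≤ 1 - p := by linarith
          positivity
        have c2 : (0:ℝ) ≤ p*(n:ℝ)*(2*(n:ℝ)+1)*(1/(2*(n:ℝ)+J) + 1/(2*(n:ℝ)+J+1)) := by
          have d1 : (0:ℝ) ≤ 1/(2*(n:ℝ)+J) := by positivity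
          have d2 : (0:ℝ) ≤ 1/(2*(n:ℝ)+J+1) := by positivity
          positivity
        have c3 : (n:ℝ)*(2*(n:ℝ)+p)*Tfun p (2*n-1+J)
            ≤ (n:ℝ)*(2*(n:ℝ)+p)*((p+1)/(2*(n:ℝ)-1+(J:ℝ))) := by
          apply mul_le_mul_of_nonneg_left hT1 (by positivity)
        have e : (n:ℝ)*(2*(n:ℝ)+p)*((p+1)/(2*(n:ℝ)-1+(J:ℝ)))
            = (n:ℝ)*(2*(n:ℝ)+p)*(p+1)/(2*(n:ℝ)-1+(J:ℝ)) := by ring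
        linarith [e ▸ c3]
      linarith
    have hlim : Filter.Tendsto
        (fun J : ℕ => hterm n p 0 + (n:ℝ)*(2*(n:ℝ)+p)*(p+1)/(2*(n:ℝ)-1+(J:ℝ)))
        Filter.atTop (nhds (hterm n p 0 + 0)) :=
      Filter.Tendsto.const_add _ (tendstoD ((n:ℝ)*(2*(n:ℝ)+p)*(p+1)) (2*(n:ℝ)-1))
    rw [add_zero] at hlim
    have hle : (n:ℝ)*(2*(n:ℝ)+p) * Tfun p (2*n-1) - (n:ℝ)*(p+1) - p/2 ≤ hterm n p 0 := by
      apply ge_of_tendsto hlim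
      filter_upwards [Filter.eventually_ge_atTop 1] with J hJ
      exact hbound J hJ
    have := hhneg 0
    linarith
  · -- p > 1 : Φ ≥ hterm 0 > 0
    have hhpos : ∀ j : ℕ, 0 < hterm n p j := by
      intro j
      unfold hterm
      apply div_pos
      · have : (0:ℝ) < (n:ℝ)*((j:ℝ)+1)*p := by positivity
        nlinarith
      · positivity
    have hbound : ∀ J : ℕ, 1 ≤ J →
        hterm n p 0 - 2*p*(n:ℝ)*(2*(n:ℝ)+1)/(2*(n:ℝ)+(J:ℝ))
          ≤ (n:ℝ)*(2*(n:ℝ)+p) * Tfun p (2*n-1) - (n:ℝ)*(p+1) - p/2 := by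
      intro J hJ
      rw [main J]
      have hsum : hterm n p 0 ≤ (Finset.range J).sum (hterm n p) := by
        obtain ⟨J', rfl⟩ : ∃ J', J = J' + 1 := ⟨J - 1, by omega⟩
        rw [Finset.sum_range_succ']
        have : (0:ℝ) ≤ (Finset.range J').sum (fun i => hterm n p (i+1)) :=
          Finset.sum_nonneg fun i _ => (hhpos (i+1)).le
        linarith
      have hRge : -(2*p*(n:ℝ)*(2*(n:ℝ)+1)/(2*(n:ℝ)+(J:ℝ))) ≤ Rterm n p J := by
        unfold Rterm
        have c1 : (0:ℝ) ≤ (n:ℝ)*(2*(n:ℝ)+p)*Tfun p (2*n-1+J) := by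
          have := hTnonneg (2*n-1+J)
          positivity
        have c2 : (1-p)*(n:ℝ)*(2*(n:ℝ))/(2*(n:ℝ)+J) ≤ 0 := by
          apply div_nonpos_of_nonpos_of_nonneg _ (by positivity)
          have h1 : (1:ℝ) - p ≤ 0 := by linarith
          have h2 : (0:ℝ) ≤ (n:ℝ)*(2*(n:ℝ)) := by positivity
          nlinarith
        have c3 : p*(n:ℝ)*(2*(n:ℝ)+1)*(1/(2*(n:ℝ)+J) + 1/(2*(n:ℝ)+J+1))
            ≤ 2*p*(n:ℝ)*(2*(n:ℝ)+1)/(2*(n:ℝ)+(J:ℝ)) := by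
          have d0 : (0:ℝ) < 2*(n:ℝ)+J := by positivity
          have d1 : 1/(2*(n:ℝ)+J+1) ≤ 1/(2*(n:ℝ)+J) := by
            apply one_div_le_one_div_of_le d0
            linarith
          have d2 : (0:ℝ) ≤ p*(n:ℝ)*(2*(n:ℝ)+1) := by positivity
          have hd : p*(n:ℝ)*(2*(n:ℝ)+1)*(1/(2*(n:ℝ)+J) + 1/(2*(n:ℝ)+J+1))
              ≤ p*(n:ℝ)*(2*(n:ℝ)+1)*(2*(1/(2*(n:ℝ)+J))) := by
            apply mul_le_mul_of_nonneg_left _ d2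
            linarith
          have e : p*(n:ℝ)*(2*(n:ℝ)+1)*(2*(1/(2*(n:ℝ)+J)))
              = 2*p*(n:ℝ)*(2*(n:ℝ)+1)/(2*(n:ℝ)+(J:ℝ)) := by ring
          linarith [e ▸ hd]
        linarith
      linarith
    have hlim : Filter.Tendsto
        (fun J : ℕ => hterm n p 0 - 2*p*(n:ℝ)*(2*(n:ℝ)+1)/(2*(n:ℝ)+(J:ℝ)))
        Filter.atTop (nhds (hterm n p 0 - 0)) :=
      Filter.Tendsto.const_sub _ (tendstoD (2*p*(n:ℝ)*(2*(n:ℝ)+1)) (2*(n:ℝ)))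
    rw [sub_zero] at hlim
    have hge : hterm n p 0 ≤ (n:ℝ)*(2*(n:ℝ)+p) * Tfun p (2*n-1) - (n:ℝ)*(p+1) - p/2 := by
      apply le_of_tendsto hlim
      filter_upwards [Filter.eventually_ge_atTop 1] with J hJ
      exact hbound J hJ
    have := hhpos 0
    linarith

lemma sqrt_log_bound {u : ℝ} (h0 : 0 < u) (h1 : u < 1) : u ^ ((1:ℝ)/2) * (-Real.log u) ≤ 2 := by
  have hv : (0:ℝ) < u ^ ((1:ℝ)/2) := Real.rpow_pos_of_pos h0 _
  have hlog : Real.log (u ^ ((1:ℝ)/2)) = (1/2) * Real.log u := Real.log_rpow h0 _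
  have hinv : Real.log ((u ^ ((1:ℝ)/2))⁻¹) ≤ (u ^ ((1:ℝ)/2))⁻¹ - 1 :=
    Real.log_le_sub_one_of_pos (by positivity)
  rw [Real.log_inv, hlog] at hinv
  have h2 : -Real.log u ≤ 2 * (u ^ ((1:ℝ)/2))⁻¹ := by linarith
  calc u ^ ((1:ℝ)/2) * (-Real.log u) ≤ u ^ ((1:ℝ)/2) * (2 * (u ^ ((1:ℝ)/2))⁻¹) := by
        apply mul_le_mul_of_nonneg_left h2 hv.le
    _ = 2 := by field_simp
    
lemma ae_ne_one : ∀ᵐ t : ℝ ∂MeasureTheory.volume, t ≠ 1 := by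
  have h : MeasureTheory.volume ({(1:ℝ)} : Set ℝ) = 0 := measure_singleton 1
  rw [MeasureTheory.ae_iff]
  convert h using 2
  ext x
  simp

lemma beta_hasDeriv (n : ℕ) (hn : 1 ≤ n) {p : ℝ} (hp : 0 < p) :
    HasDerivAt (fun y => Beta (p+1) y)
      (∫ t in (0:ℝ)..1, t ^ p * (1-t) ^ ((2*(n:ℝ))-1) * Real.log (1-t)) (2*(n:ℝ)) := by
  have hn1 : (1:ℝ) ≤ (n:ℝ) := by exact_mod_cast hn
  have key := intervalIntegral.hasDerivAt_integral_of_dominated_loc_of_deriv_le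
    (F := fun (y : ℝ) (t : ℝ) => t ^ p * (1-t) ^ (y-1))
    (F' := fun (y : ℝ) (t : ℝ) => t ^ p * (1-t) ^ (y-1) * Real.log (1-t))
    (x₀ := 2*(n:ℝ)) (a := 0) (b := 1) (μ := MeasureTheory.volume)
    (bound := fun _ => (2:ℝ)) (s := Metric.ball (2*(n:ℝ)) (1/2)) (Metric.ball_mem_nhds _ (by norm_num))
    ?_ ?_ ?_ ?_ ?_ ?_
  · have heq : (fun y => Beta (p+1) y) = fun y => ∫ t in (0:ℝ)..1, t ^ p * (1-t) ^ (y-1) := by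
      funext y
      unfold Beta
      congr 1
      funext t
      rw [show p + 1 - 1 = p by ring]
    rw [heq]
    exact key.2
  · -- measurability eventually
    filter_upwards [eventually_gt_nhds (show (3/2:ℝ) < 2*(n:ℝ) by linarith)] with y hy
    have : Continuous fun t : ℝ => t ^ p * (1-t) ^ (y-1) :=
      (cont_rpow_const hp).mul (cont_one_sub_rpow (by linarith))
    exact this.aestronglyMeasurable.restrict
  · exact ((cont_rpow_const hp).mul (cont_one_sub_rpow (by linarith))).intervalIntegrable 0 1
  · -- F' measurable
    apply MeasureTheory.AEStronglyMeasurable.restrict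
    apply Measurable.aestronglyMeasurable
    exact (((cont_rpow_const hp).measurable).mul
      ((cont_one_sub_rpow (by linarith : (0:ℝ) < 2*(n:ℝ)-1)).measurable)).mul
      (Real.measurable_log.comp (measurable_const.sub measurable_id))
  · -- bound
    filter_upwards [ae_ne_one] with t ht1 htmem y hy
    rw [Set.uIoc_of_le (by norm_num : (0:ℝ) ≤ 1)] at htmem
    have ht0 : 0 < t := htmem.1
    have ht1' : t < 1 := lt_of_le_of_ne htmem.2 ht1
    have h1t : 0 < 1 - t := by linarith
    have h1t1 : 1 - t < 1 := by linarith
    have hyb : 1/2 ≤ y - 1 := by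
      rw [Metric.mem_ball, Real.dist_eq, abs_lt] at hy
      linarith [hy.1]
    have e1 : t ^ p ≤ 1 := Real.rpow_le_one ht0.le ht1'.le hp.le
    have e2 : (1-t) ^ (y-1) ≤ (1-t) ^ ((1:ℝ)/2) :=
      Real.rpow_le_rpow_of_exponent_ge h1t h1t1.le hyb
    have e3 : (1-t) ^ ((1:ℝ)/2) * (-Real.log (1-t)) ≤ 2 := sqrt_log_bound h1t h1t1
    have hlogneg : Real.log (1-t) ≤ 0 := Real.log_nonpos h1t.le (by linarith)
    rw [Real.norm_eq_abs, abs_mul, abs_mul]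
    rw [abs_of_nonneg (Real.rpow_nonneg ht0.le p),
      abs_of_nonneg (Real.rpow_nonneg h1t.le _), abs_of_nonpos hlogneg]
    calc t ^ p * (1-t) ^ (y-1) * -Real.log (1-t)
        ≤ 1 * ((1-t) ^ ((1:ℝ)/2)) * -Real.log (1-t) := by
          apply mul_le_mul_of_nonneg_right _ (by linarith)
          exact mul_le_mul e1 e2 (Real.rpow_nonneg h1t.le _) (by norm_num)
      _ = (1-t) ^ ((1:ℝ)/2) * (-Real.log (1-t)) := by ring
      _ ≤ 2 := e3
  · exact intervalIntegrable_const
  · -- differentiability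
    filter_upwards [ae_ne_one] with t ht1 htmem y hy
    rw [Set.uIoc_of_le (by norm_num : (0:ℝ) ≤ 1)] at htmem
    have h1t : 0 < 1 - t := by
      have := lt_of_le_of_ne htmem.2 ht1
      linarith
    have hbase : HasDerivAt (fun y : ℝ => (1-t) ^ (y-1))
        ((1-t) ^ (y-1) * Real.log (1-t)) y := by
      have h1 := (Real.hasStrictDerivAt_const_rpow h1t (y-1)).hasDerivAt
      have h2 : HasDerivAt (fun y : ℝ => y - 1) 1 y := (hasDerivAt_id y).sub_const 1
      simpa [Function.comp_def] using h1.comp y h2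
    have := hbase.const_mul (t ^ p)
    refine this.congr_deriv ?_
    symm
    ring

lemma cast2n (n : ℕ) (hn : 1 ≤ n) : ((2*n-1 : ℕ):ℝ) = 2*(n:ℝ) - 1 := by
  have h1 : (2*n-1) + 1 = 2*n := by omega
  have h2 := congrArg (Nat.cast : ℕ → ℝ) h1
  push_cast at h2
  linarith

lemma BetaA (n : ℕ) (hn : 1 ≤ n) {p : ℝ} (hp : 0 < p) :
    Beta (p+1) (2*(n:ℝ)) = Aint p (2*n-1) := by
  have hn1 : (1:ℝ) ≤ (n:ℝ) := by exact_mod_cast hn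
  unfold Beta
  have sub := intervalIntegral.integral_comp_sub_left (a := (0:ℝ)) (b := 1)
    (fun s => s ^ ((2*(n:ℝ))-1) * (1-s) ^ p) 1
  norm_num at sub
  calc ∫ t in (0:ℝ)..1, t ^ (p+1-1) * (1-t) ^ ((2*(n:ℝ))-1)
      = ∫ t in (0:ℝ)..1, (1-t) ^ ((2*(n:ℝ))-1) * t ^ p := by
        apply intervalIntegral.integral_congr
        intro t _
        simp only
        rw [show p + 1 - 1 = p by ring]
        ring
    _ = ∫ s in (0:ℝ)..1, s ^ ((2*(n:ℝ))-1) * (1-s) ^ p := sub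
    _ = Aint p (2*n-1) := by
        unfold Aint
        apply intervalIntegral.integral_congr
        intro s _
        simp only [show (2*(n:ℝ))-1 = ((2*n-1 : ℕ):ℝ) from (cast2n n hn).symm,
          Real.rpow_natCast]

lemma DconvC (n : ℕ) (hn : 1 ≤ n) {p : ℝ} (hp : 0 < p) :
    (∫ t in (0:ℝ)..1, t ^ p * (1-t) ^ ((2*(n:ℝ))-1) * Real.log (1-t))
      = -(Cint p (2*n-1)) := by
  have sub := intervalIntegral.integral_comp_sub_left (a := (0:ℝ)) (b := 1)
    (fun s => s ^ ((2*(n:ℝ))-1) * (1-s) ^ p * Real.log s) 1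
  norm_num at sub
  calc ∫ t in (0:ℝ)..1, t ^ p * (1-t) ^ ((2*(n:ℝ))-1) * Real.log (1-t)
      = ∫ t in (0:ℝ)..1, (1-t) ^ ((2*(n:ℝ))-1) * t ^ p * Real.log (1-t) := by
        apply intervalIntegral.integral_congr
        intro t _
        simp only
        ring
    _ = ∫ s in (0:ℝ)..1, s ^ ((2*(n:ℝ))-1) * (1-s) ^ p * Real.log s := sub
    _ = ∫ s in (0:ℝ)..1, -(s ^ (2*n-1 : ℕ) * (1-s) ^ p * (-Real.log s)) := by
        apply intervalIntegral.integral_congr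
        intro s _
        simp only [show (2*(n:ℝ))-1 = ((2*n-1 : ℕ):ℝ) from (cast2n n hn).symm,
          Real.rpow_natCast]
        ring
    _ = -(Cint p (2*n-1)) := by
        rw [intervalIntegral.integral_neg]
        rfl

/-- For `n ≥ 1`, `p > 0` with `p ≠ 1`, and `F(a,b) = (b/a)^{(np+n)/(n+p)}·
((b+1)/(a+1))^{p/(n+p)}·B(p+1,(b+1)n/a) − B(p+1,(a+1)n/a)^{p/(n+p)}·
B(p+1,(b+1)n/b)^{n/(n+p)}`, one has `F(1,1) = 0` and the partial derivative of `F`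
with respect to `b` at `(1,1)` is nonzero. -/
theorem F_at_one_one_and_deriv_ne_zero (n : ℕ) (hn : 1 ≤ n) (p : ℝ) (hp : 0 < p)
    (hp1 : p ≠ 1) (F : ℝ → ℝ → ℝ)
    (hF : ∀ a b : ℝ, 0 < a → 0 < b →
      F a b = (b / a) ^ (((n : ℝ) * p + n) / ((n : ℝ) + p)) *
          ((b + 1) / (a + 1)) ^ (p / ((n : ℝ) + p)) * Beta (p + 1) ((b + 1) * n / a) -
        Beta (p + 1) ((a + 1) * n / a) ^ (p / ((n : ℝ) + p)) *
          Beta (p + 1) ((b + 1) * n / b) ^ ((n : ℝ) / ((n : ℝ) + p))) :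
    F 1 1 = 0 ∧ deriv (fun b => F 1 b) 1 ≠ 0 := by
  have hn1 : (1:ℝ) ≤ (n:ℝ) := by exact_mod_cast hn
  have hnp : (0:ℝ) < (n:ℝ) + p := by linarith
  have hB0pos : 0 < Beta (p+1) (2*(n:ℝ)) := by
    rw [BetaA n hn hp]; exact Aint_pos hp _
  have h2n : ((1:ℝ)+1) * (n:ℝ) / 1 = 2*(n:ℝ) := by ring
  have hdc : p / ((n:ℝ)+p) + (n:ℝ)/((n:ℝ)+p) = 1 := by
    rw [← add_div, add_comm, div_self hnp.ne']
  constructor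
  · rw [hF 1 1 one_pos one_pos, h2n]
    have e1 : (1:ℝ)/1 = 1 := by norm_num
    have e2 : ((1:ℝ)+1)/(1+1) = 1 := by norm_num
    rw [e1, e2, Real.one_rpow, Real.one_rpow, one_mul, one_mul,
      ← Real.rpow_add hB0pos, hdc, Real.rpow_one, sub_self]
  · -- the derivative
    have hB := beta_hasDeriv n hn hp
    set D : ℝ := ∫ t in (0:ℝ)..1, t ^ p * (1-t) ^ ((2*(n:ℝ))-1) * Real.log (1-t) with hD
    set α : ℝ := ((n:ℝ) * p + n) / ((n:ℝ) + p) with hα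
    set d : ℝ := p / ((n:ℝ) + p) with hd
    set c : ℝ := (n:ℝ) / ((n:ℝ) + p) with hc
    -- clean formula function
    set G : ℝ → ℝ := fun b => b ^ α * ((b+1)/2) ^ d * Beta (p+1) ((b+1)*(n:ℝ)) -
      Beta (p+1) (2*(n:ℝ)) ^ d * Beta (p+1) ((b+1)*(n:ℝ)/b) ^ c with hG
    have hFG : (fun b => F 1 b) =ᶠ[𝓝 (1:ℝ)] G := by
      filter_upwards [eventually_gt_nhds one_pos] with b hb
      rw [hF 1 b one_pos hb, hG]
      simp only
      rw [div_one, h2n]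
      norm_num
    -- pieces
    have q1 : HasDerivAt (fun b : ℝ => b ^ α) α 1 := by
      have := Real.hasDerivAt_rpow_const (x := (1:ℝ)) (p := α) (Or.inl one_ne_zero)
      simpa using this
    have q2 : HasDerivAt (fun b : ℝ => ((b+1)/2) ^ d) (d/2) 1 := by
      have hin : HasDerivAt (fun b : ℝ => (b+1)/2) (1/2) 1 := by
        have := ((hasDerivAt_id (1:ℝ)).add_const 1).div_const 2
        simpa using this
      have h := hin.rpow_const (p := d) (Or.inl (by norm_num))
      norm_num at h
      convert h using 1
      ring
    have q3 : HasDerivAt (fun b : ℝ => Beta (p+1) ((b+1)*(n:ℝ))) (D * (n:ℝ)) 1 := by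
      have hin : HasDerivAt (fun b : ℝ => (b+1)*(n:ℝ)) (n:ℝ) 1 := by
        have := ((hasDerivAt_id (1:ℝ)).add_const 1).mul_const (n:ℝ)
        simpa using this
      have hB' : HasDerivAt (fun y => Beta (p+1) y) D (((1:ℝ)+1)*(n:ℝ)) := by
        rw [show ((1:ℝ)+1)*(n:ℝ) = 2*(n:ℝ) by ring]
        exact hB
      exact hB'.comp 1 hin
    have q12 := q1.mul q2
    have q123 := q12.mul q3
    -- value simplification for the product part
    have q123' : HasDerivAt (fun b : ℝ => b ^ α * ((b+1)/2) ^ d * Beta (p+1) ((b+1)*(n:ℝ)))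
        ((α + d/2) * Beta (p+1) (2*(n:ℝ)) + D * (n:ℝ)) 1 := by
      refine q123.congr_deriv ?_
      symm
      rw [show ((1:ℝ)+1)*(n:ℝ) = 2*(n:ℝ) by ring]
      norm_num [Real.one_rpow]
      try ring
    have q4 : HasDerivAt (fun b : ℝ => (b+1)*(n:ℝ)/b) (-(n:ℝ)) 1 := by
      have hnum : HasDerivAt (fun b : ℝ => (b+1)*(n:ℝ)) (n:ℝ) 1 := by
        have := ((hasDerivAt_id (1:ℝ)).add_const 1).mul_const (n:ℝ)
        simpa using this
      have := hnum.div (hasDerivAt_id (1:ℝ)) one_ne_zero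
      refine this.congr_deriv ?_
      symm
      norm_num
      ring
    have q5 : HasDerivAt (fun b : ℝ => Beta (p+1) ((b+1)*(n:ℝ)/b)) (D * -(n:ℝ)) 1 := by
      have hB' : HasDerivAt (fun y => Beta (p+1) y) D (((1:ℝ)+1)*(n:ℝ)/1) := by
        rw [h2n]; exact hB
      have hcomp := HasDerivAt.comp (h₂ := fun y => Beta (p+1) y)
        (h := fun b : ℝ => (b+1)*(n:ℝ)/b) 1 hB' q4
      simpa [Function.comp_def] using hcomp
    have q6 : HasDerivAt (fun b : ℝ => Beta (p+1) ((b+1)*(n:ℝ)/b) ^ c)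
        (c * Beta (p+1) (2*(n:ℝ)) ^ (c-1) * (D * -(n:ℝ))) 1 := by
      have h := q5.rpow_const (p := c) (Or.inl (by rw [h2n]; exact hB0pos.ne'))
      rw [h2n] at h
      convert h using 1
      ring
    have q7 := q6.const_mul (Beta (p+1) (2*(n:ℝ)) ^ d)
    have qG : HasDerivAt G
        ((α + d/2) * Beta (p+1) (2*(n:ℝ)) + D * (n:ℝ) + c * (n:ℝ) * D) 1 := by
      have hq := q123'.sub q7
      refine hq.congr_deriv ?_
      symm
      have hpow : Beta (p+1) (2*(n:ℝ)) ^ d * Beta (p+1) (2*(n:ℝ)) ^ (c-1) = 1 := by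
        rw [← Real.rpow_add hB0pos, show d + (c-1) = 0 by linarith [hdc], Real.rpow_zero]
      linear_combination (-(c * (n:ℝ) * D)) * hpow
    have hderiv_eq : deriv (fun b => F 1 b) 1
        = (α + d/2) * Beta (p+1) (2*(n:ℝ)) + D * (n:ℝ) + c * (n:ℝ) * D := by
      rw [hFG.deriv_eq, qG.deriv]
    rw [hderiv_eq]
    -- now show the value is nonzero
    rw [BetaA n hn hp]
    rw [show D = -(Cint p (2*n-1)) from DconvC n hn hp]
    have hΦ := phi_ne_zero n hn hp hp1
    have hA := Aint_pos hp (2*n-1)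
    have hAne : Aint p (2*n-1) ≠ 0 := hA.ne'
    have hnpne : (n:ℝ) + p ≠ 0 := hnp.ne'
    have key : (α + d/2) * Aint p (2*n-1) + -(Cint p (2*n-1)) * (n:ℝ)
          + c * (n:ℝ) * -(Cint p (2*n-1))
        = -(Aint p (2*n-1)/((n:ℝ)+p))
          * ((n:ℝ)*(2*(n:ℝ)+p) * (Cint p (2*n-1) / Aint p (2*n-1)) - (n:ℝ)*(p+1) - p/2) := by
      rw [hα, hd, hc]
      field_simp
      ring
    intro hval
    apply hΦ
    rw [key] at hval
    have hfac : -(Aint p (2*n-1)/((n:ℝ)+p)) ≠ 0 :=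
      neg_ne_zero.mpr (div_ne_zero hAne hnpne)
    exact (mul_eq_zero.mp hval).resolve_left hfac
end

section
/- Let X be a nonempty set, n ≥ 1 an integer, p > 0 and A ≥ 1 real numbers. Let F : X^{n+1} → [0,∞) be a function that is invariant under all permutations of its last n arguments and satisfies F(x₀, x₁, x₂, …, xₙ) ≤ A · F(x₀, x₀, x₂, …, xₙ)^{p/(p+1)} · F(x₁, x₁, x₂, …, xₙ)^{1/(p+1)} for all x₀, …, xₙ ∈ X. Then for all x₀, …, xₙ ∈ X one has F(x₀, x₁, …, xₙ) ≤ A^{α(p,n)} · F(x₀, x₀, …, x₀)^{p/(n+p)} · ∏_{j=1}^{n} F(x_j, x_j, …, x_j)^{1/(n+p)}, where α(p,n) = (p+2)·((p+1)/p)^{n−1} − (p+1). -/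
open Real Function

namespace PerssonAux

variable {X : Type*}

lemma swap_succ {m : ℕ} (i j s : Fin m) :
    Equiv.swap i.succ j.succ s.succ = (Equiv.swap i j s).succ := by
  rcases eq_or_ne s i with rfl | hi
  · simp [Equiv.swap_apply_left]
  · rcases eq_or_ne s j with rfl | hj
    · simp [Equiv.swap_apply_right]
    · rw [Equiv.swap_apply_of_ne_of_ne (by simpa [Fin.succ_inj] using hi)
        (by simpa [Fin.succ_inj] using hj),
        Equiv.swap_apply_of_ne_of_ne hi hj]

lemma one_ne_zero' {m : ℕ} : (1 : Fin (m+2)) ≠ 0 := by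
  rw [← Fin.succ_zero_eq_one]; exact Fin.succ_ne_zero _

lemma two_ne_zero' {m : ℕ} : (2 : Fin (m+3)) ≠ 0 := by
  rw [← Fin.succ_one_eq_two]; exact Fin.succ_ne_zero _

lemma one_ne_two' {m : ℕ} : (1 : Fin (m+3)) ≠ 2 := by
  rw [← Fin.succ_zero_eq_one, ← Fin.succ_one_eq_two, Ne, Fin.succ_inj]
  simp [Fin.ext_iff]


lemma sw0 {m : ℕ} : Equiv.swap (1 : Fin (m+3)) 2 0 = 0 :=
  Equiv.swap_apply_of_ne_of_ne (Ne.symm one_ne_zero') (Ne.symm two_ne_zero')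

lemma sw3 {m : ℕ} (u : Fin m) :
    Equiv.swap (1 : Fin (m+3)) 2 u.succ.succ.succ = u.succ.succ.succ := by
  refine Equiv.swap_apply_of_ne_of_ne ?_ ?_
  · rw [← Fin.succ_zero_eq_one, Ne, Fin.succ_inj]
    exact Fin.succ_ne_zero _
  · rw [← Fin.succ_one_eq_two, Ne, Fin.succ_inj, ← Fin.succ_zero_eq_one, Fin.succ_inj]
    exact Fin.succ_ne_zero _

lemma cons_at_one {m : ℕ} (a : X) (g : Fin (m+1) → X) :
    (Fin.cons a g : Fin (m+2) → X) 1 = g 0 := by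
  rw [← Fin.succ_zero_eq_one, Fin.cons_succ]

lemma cons_at_two {m : ℕ} (a : X) (g : Fin (m+2) → X) :
    (Fin.cons a g : Fin (m+3) → X) 2 = g 1 := by
  rw [← Fin.succ_one_eq_two, Fin.cons_succ]

lemma swap12_comp_cons {m : ℕ} (x y z : X) (f : Fin m → X) :
    (Fin.cons x (Fin.cons y (Fin.cons z f)) : Fin (m+3) → X) ∘ Equiv.swap 1 2 =
      Fin.cons x (Fin.cons z (Fin.cons y f)) := by
  funext t
  refine Fin.cases ?_ (fun s => ?_) t
  · simp [sw0]
  refine Fin.cases ?_ (fun u => ?_) s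
  · simp [Fin.succ_zero_eq_one, Equiv.swap_apply_left, cons_at_two, cons_at_one,
      Fin.cons_succ, Fin.cons_zero]
  refine Fin.cases ?_ (fun w => ?_) u
  · simp [Fin.succ_zero_eq_one, Fin.succ_one_eq_two, Equiv.swap_apply_right, cons_at_one,
      cons_at_two, Fin.cons_succ, Fin.cons_zero]
  · simp [sw3, Fin.cons_succ]


lemma update_cons_one {m : ℕ} (x z : X) (g : Fin (m+1) → X) :
    update (Fin.cons x g : Fin (m+2) → X) 1 z = Fin.cons x (update g 0 z) := by
  rw [← Fin.succ_zero_eq_one, ← Fin.cons_update]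

lemma cons_const {m : ℕ} (a : X) :
    (Fin.cons a (fun _ => a) : Fin (m+1) → X) = fun _ => a := by
  funext t
  refine Fin.cases ?_ (fun s => ?_) t <;> simp

/-- the key convexity/binomial bound for the constants -/
lemma geom_bound (p : ℝ) (hp : 0 < p) : ∀ m : ℕ,
    p + m + 2 + m*(m+1)/(2*p) ≤ (p+2) * ((p+1)/p)^m := by
  intro m
  induction m with
  | zero => norm_num
  | succ k ih =>
    have hkey : p + (k+1) + 2 + (k+1)*((k:ℝ)+2)/(2*p)
        ≤ ((p+1)/p) * (p + k + 2 + k*(k+1)/(2*p)) := by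
      rw [← sub_nonneg]
      have : ((p+1)/p) * (p + (k:ℝ) + 2 + k*(k+1)/(2*p)) -
          (p + ((k:ℝ)+1) + 2 + (k+1)*((k:ℝ)+2)/(2*p))
          = (2*p + (k:ℝ)^2 + k)/(2*p^2) := by
        field_simp
        ring
      rw [this]
      positivity
    have h2 : ((p+1)/p) * (p + (k:ℝ) + 2 + k*(k+1)/(2*p))
        ≤ ((p+1)/p) * ((p+2) * ((p+1)/p)^k) := by
      apply mul_le_mul_of_nonneg_left ih
      positivity
    calc p + ((k:ℕ)+1:ℕ) + 2 + ((k:ℕ)+1:ℕ)*(((k:ℕ)+1:ℕ)+1)/(2*p)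
        = p + ((k:ℝ)+1) + 2 + ((k:ℝ)+1)*((k:ℝ)+2)/(2*p) := by push_cast; ring
      _ ≤ ((p+1)/p) * ((p+2) * ((p+1)/p)^k) := le_trans hkey h2
      _ = (p+2) * ((p+1)/p)^(k+1) := by ring

/-- split a power: x ^ a * x ^ b = x for nonneg x when a+b=1, a,b>0 -/
lemma rpow_split {x a b : ℝ} (hx : 0 ≤ x) (ha : 0 < a) (hb : 0 < b) (hab : a + b = 1) :
    x ^ a * x ^ b = x := by
  rcases eq_or_lt_of_le hx with h | h
  · rw [← h, Real.zero_rpow ha.ne', Real.zero_rpow hb.ne']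
    norm_num
  · rw [← Real.rpow_add h, hab, Real.rpow_one]


lemma update_succ_comp {m : ℕ} (w : Fin (m+1) → X) (i : Fin m) (a : X) :
    update w i.succ a ∘ Fin.succ = update (w ∘ Fin.succ) i a := by
  funext s
  rcases eq_or_ne s i with rfl | hs
  · simp
  · rw [comp_apply, update_of_ne (fun h => hs (Fin.succ_injective _ h)),
      update_of_ne hs, comp_apply]

lemma update_zero_comp {m : ℕ} (w : Fin (m+1) → X) (a : X) :
    update w 0 a ∘ Fin.succ = w ∘ Fin.succ := by
  funext s
  rw [comp_apply, update_of_ne (Fin.succ_ne_zero s), comp_apply]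

lemma combine {A B D0 D1 P g q r : ℝ} (hA : 0 ≤ A) (hB : 0 ≤ B) (h0 : 0 ≤ D0)
    (h1 : 0 ≤ D1) (hP : 0 ≤ P) (hq : 0 < q) (hr : 0 < r) (hqr : q + r = 1) :
    A * (B * D0 ^ g * P) ^ q * (B * D1 ^ g * P) ^ r
      = A * B * D0 ^ (g*q) * D1 ^ (g*r) * P := by
  rw [Real.mul_rpow (mul_nonneg hB (Real.rpow_nonneg h0 g)) hP,
      Real.mul_rpow hB (Real.rpow_nonneg h0 g),
      Real.mul_rpow (mul_nonneg hB (Real.rpow_nonneg h1 g)) hP,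
      Real.mul_rpow hB (Real.rpow_nonneg h1 g),
      ← Real.rpow_mul h0, ← Real.rpow_mul h1]
  calc A * (B ^ q * D0 ^ (g*q) * P ^ q) * (B ^ r * D1 ^ (g*r) * P ^ r)
      = A * (B^q * B^r) * D0 ^ (g*q) * D1 ^ (g*r) * (P^q * P^r) := by ring
    _ = A * B * D0 ^ (g*q) * D1 ^ (g*r) * P := by
        rw [rpow_split hB hq hr hqr, rpow_split hP hq hr hqr]

theorem aux : ∀ (n : ℕ) (p A : ℝ), 0 < p → 1 ≤ A →
    ∀ e : (Fin (n+1) → X) → ℝ,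
    (∀ w, 0 ≤ e w) →
    (∀ (w : Fin (n+1) → X) (i j : Fin (n+1)), i ≠ 0 → j ≠ 0 →
        e (w ∘ Equiv.swap i j) = e w) →
    (∀ w : Fin (n+1) → X, e w ≤ A * e (update w 1 (w 0)) ^ (p/(p+1)) *
        e (update w 0 (w 1)) ^ (1/(p+1))) →
    ∀ w, e w ≤ A ^ ((n:ℝ) + n*((n:ℝ)-1)/(2*p)) *
        e (fun _ => w 0) ^ (p/(n+p)) *
        ∏ j : Fin n, e (fun _ => w j.succ) ^ (1/((n:ℝ)+p)) := by
  intro n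
  induction n with
  | zero =>
    intro p A hp hA e he0 hes her w
    have hw : w = fun _ => w 0 := funext fun t => by rw [Fin.eq_zero t]
    simp only [Nat.cast_zero, zero_add, zero_mul, zero_div, add_zero]
    rw [Real.rpow_zero, div_self hp.ne', Real.rpow_one, ← hw]
    simp [le_refl]
  | succ k ih =>
    rcases k with _ | k'
    · -- base case: n = 1, arity 2
      intro p A hp hA e he0 hes her w
      have h1 : update w 1 (w 0) = fun _ => w 0 := by
        funext t; fin_cases t <;> simp
      have h0 : update w 0 (w 1) = fun _ => w 1 := by
        funext t; fin_cases t <;> simp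
      have H := her w
      rw [h1, h0] at H
      have hexp : ((0+1:ℕ):ℝ) + (0+1:ℕ)*(((0+1:ℕ):ℝ)-1)/(2*p) = 1 := by push_cast; ring
      rw [hexp, Real.rpow_one, Fin.prod_univ_one]
      have hc : ((0+1:ℕ):ℝ) + p = p + 1 := by push_cast; ring
      rw [hc, Fin.succ_zero_eq_one]
      exact H
    · -- inductive step: n = k'+2, arity k'+3
      intro p A hp hA e he0 hes her w
      have hA0 : (0:ℝ) < A := lt_of_lt_of_le one_pos hA
      have hp1 : (0:ℝ) < p + 1 := by linarith
      have hq0 : (0:ℝ) < p/(p+1) := by positivity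
      have hr0 : (0:ℝ) < 1/(p+1) := by positivity
      have hqr : p/(p+1) + 1/(p+1) = 1 := by field_simp
      set A' : ℝ := A ^ ((p+1)/p) with hA'def
      have hA'0 : (0:ℝ) < A' := Real.rpow_pos_of_pos hA0 _
      have hA' : 1 ≤ A' := by
        calc (1:ℝ) = A ^ (0:ℝ) := (Real.rpow_zero A).symm
          _ ≤ A ^ ((p+1)/p) := Real.rpow_le_rpow_of_exponent_le hA (by positivity)
      set E : (Fin (k'+2) → X) → ℝ := fun v => e (Fin.cons (v 0) v) with hEdef
      have hE0 : ∀ v, 0 ≤ E v := fun v => he0 _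
      have Econs : ∀ (a : X) (g : Fin (k'+1) → X),
          E (Fin.cons a g) = e (Fin.cons a (Fin.cons a g)) := by
        intro a g
        show e (Fin.cons ((Fin.cons a g : Fin (k'+2) → X) 0) (Fin.cons a g)) = _
        rw [Fin.cons_zero]
      have hEs : ∀ (v : Fin (k'+2) → X) (i j : Fin (k'+2)), i ≠ 0 → j ≠ 0 →
          E (v ∘ Equiv.swap i j) = E v := by
        intro v i j hi hj
        have h0 : (v ∘ Equiv.swap i j) 0 = v 0 := by
          simp [Equiv.swap_apply_of_ne_of_ne (Ne.symm hi) (Ne.symm hj)]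
        have hfun : Fin.cons ((v ∘ Equiv.swap i j) 0) (v ∘ Equiv.swap i j)
            = (Fin.cons (v 0) v) ∘ Equiv.swap i.succ j.succ := by
          rw [h0]
          funext t
          refine Fin.cases ?_ (fun s => ?_) t
          · rw [comp_apply,
              Equiv.swap_apply_of_ne_of_ne (Ne.symm (Fin.succ_ne_zero i))
                (Ne.symm (Fin.succ_ne_zero j))]
            simp
          · rw [comp_apply, swap_succ, Fin.cons_succ, Fin.cons_succ, comp_apply]
        have h2 : E (v ∘ Equiv.swap i j)
            = e (Fin.cons ((v ∘ Equiv.swap i j) 0) (v ∘ Equiv.swap i j)) := rfl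
        rw [h2, hfun, hes _ _ _ (Fin.succ_ne_zero i) (Fin.succ_ne_zero j)]
      -- key recursion inequality for E, with parameter p+1 and constant A'
      have key : ∀ (a b : X) (u : Fin k' → X),
          E (Fin.cons a (Fin.cons b u)) ≤
            A' * E (Fin.cons a (Fin.cons a u)) ^ ((p+1)/((p+1)+1)) *
              E (Fin.cons b (Fin.cons b u)) ^ (1/((p+1)+1)) := by
        intro a b u
        rw [Econs, Econs, Econs]
        rcases eq_or_lt_of_le (he0 (Fin.cons a (Fin.cons a (Fin.cons b u)))) with h0 | hTpos
        · rw [← h0]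
          have h1 : (0:ℝ) ≤ e (Fin.cons a (Fin.cons a (Fin.cons a u))) := he0 _
          have h2 : (0:ℝ) ≤ e (Fin.cons b (Fin.cons b (Fin.cons b u))) := he0 _
          positivity
        · set T := e (Fin.cons a (Fin.cons a (Fin.cons b u))) with hTdef
          set Xv := e (Fin.cons a (Fin.cons a (Fin.cons a u))) with hXdef
          set Z := e (Fin.cons b (Fin.cons b (Fin.cons b u))) with hZdef
          have hXv0 : (0:ℝ) ≤ Xv := he0 _
          have hZ0 : (0:ℝ) ≤ Z := he0 _
          have step1 : T ≤ A * Xv ^ (p/(p+1)) *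
              e (Fin.cons b (Fin.cons b (Fin.cons a u))) ^ (1/(p+1)) := by
            have hswap := hes (Fin.cons a (Fin.cons a (Fin.cons b u))) 1 2
              one_ne_zero' two_ne_zero'
            rw [swap12_comp_cons] at hswap
            have h2 := her (Fin.cons a (Fin.cons b (Fin.cons a u)))
            rw [Fin.cons_zero, cons_at_one, Fin.cons_zero, update_cons_one,
              Fin.update_cons_zero, Fin.update_cons_zero, hswap] at h2
            exact h2
          have step2 : e (Fin.cons b (Fin.cons b (Fin.cons a u))) ≤
              A * Z ^ (p/(p+1)) * T ^ (1/(p+1)) := by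
            have hswap := hes (Fin.cons b (Fin.cons b (Fin.cons a u))) 1 2
              one_ne_zero' two_ne_zero'
            rw [swap12_comp_cons] at hswap
            have h3 := her (Fin.cons b (Fin.cons a (Fin.cons b u)))
            rw [Fin.cons_zero, cons_at_one, Fin.cons_zero, update_cons_one,
              Fin.update_cons_zero, Fin.update_cons_zero, hswap] at h3
            exact h3
          have comb : T ≤ A * Xv ^ (p/(p+1)) *
              (A * Z ^ (p/(p+1)) * T ^ (1/(p+1))) ^ (1/(p+1)) := by
            refine le_trans step1 ?_
            have m2 : e (Fin.cons b (Fin.cons b (Fin.cons a u))) ^ (1/(p+1)) ≤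
                (A * Z ^ (p/(p+1)) * T ^ (1/(p+1))) ^ (1/(p+1)) :=
              Real.rpow_le_rpow (he0 _) step2 hr0.le
            have hXq : (0:ℝ) ≤ A * Xv ^ (p/(p+1)) := by positivity
            exact mul_le_mul_of_nonneg_left m2 hXq
          have expand : (A * Z ^ (p/(p+1)) * T ^ (1/(p+1))) ^ (1/(p+1))
              = A ^ (1/(p+1)) * Z ^ ((p/(p+1))*(1/(p+1))) * T ^ ((1/(p+1))*(1/(p+1))) := by
            rw [Real.mul_rpow (by positivity) (Real.rpow_nonneg hTpos.le _),
              Real.mul_rpow hA0.le (Real.rpow_nonneg hZ0 _),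
              ← Real.rpow_mul hZ0, ← Real.rpow_mul hTpos.le]
          set C : ℝ := A ^ ((1:ℝ)+1/(p+1)) * Xv ^ (p/(p+1)) * Z ^ ((p/(p+1))*(1/(p+1)))
            with hCdef
          have hC0 : (0:ℝ) ≤ C := by
            have := Real.rpow_nonneg hXv0 (p/(p+1))
            have := Real.rpow_nonneg hZ0 ((p/(p+1))*(1/(p+1)))
            positivity
          have base : T ≤ C * T ^ ((1/(p+1))*(1/(p+1))) := by
            refine le_trans comb (le_of_eq ?_)
            rw [expand, hCdef, Real.rpow_add hA0, Real.rpow_one]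
            ring
          have hTrr : (0:ℝ) < T ^ ((1/(p+1))*(1/(p+1))) := Real.rpow_pos_of_pos hTpos _
          have h5 : T ^ (1 - (1/(p+1))*(1/(p+1))) ≤ C := by
            refine le_of_mul_le_mul_right ?_ hTrr
            rw [← Real.rpow_add hTpos]
            calc T ^ (1 - 1/(p+1)*(1/(p+1)) + 1/(p+1)*(1/(p+1))) = T ^ (1:ℝ) := by norm_num
              _ = T := Real.rpow_one T
              _ ≤ C * T ^ (1/(p+1)*(1/(p+1))) := base
          set sv : ℝ := ((p+1)*(p+1))/(p*(p+2)) with hsv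
          have hsv0 : (0:ℝ) ≤ sv := by positivity
          have h6 : (T ^ (1 - (1/(p+1))*(1/(p+1)))) ^ sv ≤ C ^ sv :=
            Real.rpow_le_rpow (Real.rpow_nonneg hTpos.le _) h5 hsv0
          have hTs : (T ^ (1 - (1/(p+1))*(1/(p+1)))) ^ sv = T := by
            rw [← Real.rpow_mul hTpos.le]
            have hone : (1 - (1/(p+1))*(1/(p+1))) * sv = 1 := by
              rw [hsv]; field_simp; ring
            rw [hone, Real.rpow_one]
          rw [hTs] at h6
          have hCs : C ^ sv = A ^ (((1:ℝ)+1/(p+1))*sv) * Xv ^ ((p/(p+1))*sv) *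
              Z ^ (((p/(p+1))*(1/(p+1)))*sv) := by
            rw [hCdef, Real.mul_rpow (by positivity) (Real.rpow_nonneg hZ0 _),
              Real.mul_rpow (by positivity) (Real.rpow_nonneg hXv0 _),
              ← Real.rpow_mul hA0.le, ← Real.rpow_mul hXv0, ← Real.rpow_mul hZ0]
          have e1 : ((1:ℝ)+1/(p+1))*sv = (p+1)/p := by rw [hsv]; field_simp; ring
          have e2 : (p/(p+1))*sv = (p+1)/((p+1)+1) := by rw [hsv]; field_simp; ring
          have e3 : ((p/(p+1))*(1/(p+1)))*sv = 1/((p+1)+1) := by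
            rw [hsv]; field_simp
            ring
          rw [hCs, e1, e2, e3] at h6
          exact h6
      -- recursion hypothesis for E in the exact shape needed
      have hEr : ∀ v : Fin (k'+2) → X,
          E v ≤ A' * E (update v 1 (v 0)) ^ ((p+1)/((p+1)+1)) *
            E (update v 0 (v 1)) ^ (1/((p+1)+1)) := by
        intro v
        have h1 : Fin.tail v = Fin.cons (v 1) (Fin.tail (Fin.tail v)) := by
          have := (Fin.cons_self_tail (Fin.tail v)).symm
          rwa [show Fin.tail v 0 = v 1 from by
            show v (Fin.succ 0) = v 1
            rw [Fin.succ_zero_eq_one]] at this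
        have hvv : v = Fin.cons (v 0) (Fin.cons (v 1) (Fin.tail (Fin.tail v))) := by
          conv_lhs => rw [← Fin.cons_self_tail v, h1]
        have hu1 : update v 1 (v 0) =
            Fin.cons (v 0) (Fin.cons (v 0) (Fin.tail (Fin.tail v))) := by
          conv_lhs => rw [hvv]
          rw [update_cons_one, Fin.update_cons_zero, Fin.cons_zero]
        have hu0 : update v 0 (v 1) =
            Fin.cons (v 1) (Fin.cons (v 1) (Fin.tail (Fin.tail v))) := by
          conv_lhs => rw [hvv]
          rw [Fin.update_cons_zero, cons_at_one, Fin.cons_zero]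
        rw [hu1, hu0]
        conv_lhs => rw [hvv]
        exact key (v 0) (v 1) (Fin.tail (Fin.tail v))
      have HE := ih (p+1) A' (by linarith) hA' E hE0 hEs hEr
      -- decompose w
      have hww : w = Fin.cons (w 0) (Fin.cons (w 1)
          (fun j : Fin (k'+1) => w j.succ.succ)) := by
        funext t
        refine Fin.cases ?_ (fun s => ?_) t
        · rw [Fin.cons_zero]
        · refine Fin.cases ?_ (fun u => ?_) s
          · rw [Fin.cons_succ, Fin.cons_zero, Fin.succ_zero_eq_one]
          · rw [Fin.cons_succ, Fin.cons_succ]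
      have hu1 : update w 1 (w 0) = Fin.cons (w 0) (Fin.cons (w 0)
          (fun j : Fin (k'+1) => w j.succ.succ)) := by
        conv_lhs => rw [hww]
        rw [update_cons_one, Fin.update_cons_zero, Fin.cons_zero]
      have hu0 : update w 0 (w 1) = Fin.cons (w 1) (Fin.cons (w 1)
          (fun j : Fin (k'+1) => w j.succ.succ)) := by
        conv_lhs => rw [hww]
        rw [Fin.update_cons_zero, cons_at_one, Fin.cons_zero]
      have H := her w
      rw [hu1, hu0, ← Econs (w 0) (fun j : Fin (k'+1) => w j.succ.succ),
        ← Econs (w 1) (fun j : Fin (k'+1) => w j.succ.succ)] at H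
      have hEconst : ∀ a : X, E (fun _ => a) = e (fun _ => a) := by
        intro a
        have h' : E (fun _ => a) = e (Fin.cons a (fun _ => a)) := rfl
        rw [h', cons_const]
      have hcast : ((k'+1:ℕ):ℝ) + (p+1) = ((k'+1+1:ℕ):ℝ) + p := by push_cast; ring
      have HE0 := HE (Fin.cons (w 0) (fun j : Fin (k'+1) => w j.succ.succ))
      have HE1 := HE (Fin.cons (w 1) (fun j : Fin (k'+1) => w j.succ.succ))
      simp only [Fin.cons_zero, Fin.cons_succ, hEconst, hcast] at HE0 HE1
      -- abbreviations
      set cK : ℝ := ((k'+1:ℕ):ℝ) + ((k'+1:ℕ):ℝ) * (((k'+1:ℕ):ℝ) - 1)/(2*(p+1)) with hcK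
      set gK : ℝ := (p+1)/(((k'+1+1:ℕ):ℝ) + p) with hgK
      set P : ℝ := ∏ j : Fin (k'+1), e (fun _ => w j.succ.succ) ^ (1/(((k'+1+1:ℕ):ℝ) + p))
        with hPdef
      have hP0 : (0:ℝ) ≤ P := Finset.prod_nonneg (fun j _ => Real.rpow_nonneg (he0 _) _)
      set D0 : ℝ := e (fun _ => w 0) with hD0def
      set D1 : ℝ := e (fun _ => w 1) with hD1def
      have hD0 : (0:ℝ) ≤ D0 := he0 _
      have hD1 : (0:ℝ) ≤ D1 := he0 _
      have hR0 : (0:ℝ) ≤ A' ^ cK * D0 ^ gK * P :=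
        mul_nonneg (mul_nonneg (Real.rpow_nonneg hA'0.le _) (Real.rpow_nonneg hD0 _)) hP0
      have hR1 : (0:ℝ) ≤ A' ^ cK * D1 ^ gK * P :=
        mul_nonneg (mul_nonneg (Real.rpow_nonneg hA'0.le _) (Real.rpow_nonneg hD1 _)) hP0
      have step : e w ≤ A * (A' ^ cK * D0 ^ gK * P) ^ (p/(p+1)) *
          (A' ^ cK * D1 ^ gK * P) ^ (1/(p+1)) := by
        refine le_trans H ?_
        have m1 := Real.rpow_le_rpow (hE0 _) HE0 hq0.le
        have m2 := Real.rpow_le_rpow (hE0 _) HE1 hr0.le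
        exact mul_le_mul (mul_le_mul_of_nonneg_left m1 hA0.le) m2
          (Real.rpow_nonneg (hE0 _) _)
          (mul_nonneg hA0.le (Real.rpow_nonneg hR0 _))
      have hNp : (0:ℝ) < ((k'+1+1:ℕ):ℝ) + p := by positivity
      have hAB : A * A' ^ cK = A ^ (((k'+1+1:ℕ):ℝ) +
          ((k'+1+1:ℕ):ℝ) * (((k'+1+1:ℕ):ℝ) - 1)/(2*p)) := by
        rw [hA'def, ← Real.rpow_mul hA0.le]
        rw [show A * A ^ ((p+1)/p * cK) = A ^ (1 + (p+1)/p * cK) from by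
          rw [Real.rpow_add hA0, Real.rpow_one]]
        congr 1
        rw [hcK]
        push_cast
        field_simp
        ring
      have hg0 : gK * (p/(p+1)) = p/(((k'+1+1:ℕ):ℝ) + p) := by
        rw [hgK]; field_simp
      have hg1 : gK * (1/(p+1)) = 1/(((k'+1+1:ℕ):ℝ) + p) := by
        rw [hgK]; field_simp
      calc e w ≤ A * (A' ^ cK * D0 ^ gK * P) ^ (p/(p+1)) *
            (A' ^ cK * D1 ^ gK * P) ^ (1/(p+1)) := step
        _ = A * A' ^ cK * D0 ^ (gK*(p/(p+1))) * D1 ^ (gK*(1/(p+1))) * P :=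
            combine hA0.le (Real.rpow_nonneg hA'0.le _) hD0 hD1 hP0 hq0 hr0 hqr
        _ = A ^ (((k'+1+1:ℕ):ℝ) + ((k'+1+1:ℕ):ℝ) * (((k'+1+1:ℕ):ℝ) - 1)/(2*p)) *
            D0 ^ (p/(((k'+1+1:ℕ):ℝ) + p)) *
            (D1 ^ (1/(((k'+1+1:ℕ):ℝ) + p)) * P) := by
            rw [hAB, hg0, hg1]; ring
        _ = A ^ (((k'+1+1:ℕ):ℝ) + ((k'+1+1:ℕ):ℝ) * (((k'+1+1:ℕ):ℝ) - 1)/(2*p)) *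
            D0 ^ (p/(((k'+1+1:ℕ):ℝ) + p)) *
            ∏ j : Fin (k'+1+1), e (fun _ => w j.succ) ^ (1/(((k'+1+1:ℕ):ℝ) + p)) := by
            rw [Fin.prod_univ_succ]
            simp only [Fin.succ_zero_eq_one]
            rfl

end PerssonAux

open PerssonAux


/-- Persson's Hölder-type combination principle: if `F : X^{n+1} → [0,∞)`
(encoded as `F : X → (Fin n → X) → ℝ` with `F x₀ x` standing for
`F(x₀, x 0, …, x (n-1))`) is invariant under permutations of its last `n`
arguments and satisfies
`F(x₀,x₁,x₂,…,xₙ) ≤ A·F(x₀,x₀,x₂,…,xₙ)^{p/(p+1)}·F(x₁,x₁,x₂,…,xₙ)^{1/(p+1)}`,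
then `F(x₀,…,xₙ) ≤ A^{α(p,n)}·F(x₀,…,x₀)^{p/(n+p)}·∏ⱼ F(xⱼ,…,xⱼ)^{1/(n+p)}`
with `α(p,n) = (p+2)((p+1)/p)^{n−1} − (p+1)`. -/
theorem persson_holder_principle {X : Type*} [Nonempty X] (n : ℕ) (hn : 0 < n)
    (p A : ℝ) (hp : 0 < p) (hA : 1 ≤ A)
    (F : X → (Fin n → X) → ℝ)
    (hF0 : ∀ (x₀ : X) (x : Fin n → X), 0 ≤ F x₀ x)
    (hsym : ∀ (x₀ : X) (x : Fin n → X) (σ : Equiv.Perm (Fin n)), F x₀ (x ∘ σ) = F x₀ x)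
    (hrec : ∀ (x₀ : X) (x : Fin n → X),
      F x₀ x ≤ A * (F x₀ (Function.update x ⟨0, hn⟩ x₀)) ^ (p / (p + 1)) *
        (F (x ⟨0, hn⟩) x) ^ (1 / (p + 1))) :
    ∀ (x₀ : X) (x : Fin n → X),
      F x₀ x ≤ A ^ ((p + 2) * ((p + 1) / p) ^ (n - 1) - (p + 1)) *
        (F x₀ (fun _ => x₀)) ^ (p / ((n : ℝ) + p)) *
        ∏ j : Fin n, (F (x j) (fun _ => x j)) ^ (1 / ((n : ℝ) + p)) := by
  intro x₀ x
  obtain ⟨m, rfl⟩ : ∃ m, n = m + 1 := ⟨n - 1, (Nat.succ_pred_eq_of_pos hn).symm⟩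
  have hA0 : (0:ℝ) < A := lt_of_lt_of_le one_pos hA
  set e : (Fin (m+1+1) → X) → ℝ := fun w => F (w 0) (w ∘ Fin.succ) with hedef
  have h01 : ((⟨0, hn⟩ : Fin (m+1))).succ = (1 : Fin (m+1+1)) := by
    ext
    rw [Fin.val_succ]
    simp
  have he0 : ∀ w, 0 ≤ e w := fun w => hF0 _ _
  have hese : ∀ (w : Fin (m+1+1) → X) (i j : Fin (m+1+1)), i ≠ 0 → j ≠ 0 →
      e (w ∘ Equiv.swap i j) = e w := by
    intro w i j hi hj
    have h0 : (w ∘ Equiv.swap i j) 0 = w 0 := by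
      simp [Equiv.swap_apply_of_ne_of_ne (Ne.symm hi) (Ne.symm hj)]
    have hcomp : (w ∘ Equiv.swap i j) ∘ Fin.succ
        = (w ∘ Fin.succ) ∘ Equiv.swap (i.pred hi) (j.pred hj) := by
      funext s
      rw [comp_apply, comp_apply, comp_apply, comp_apply]
      congr 1
      conv_lhs => rw [← Fin.succ_pred i hi, ← Fin.succ_pred j hj]
      rw [swap_succ]
    show F ((w ∘ Equiv.swap i j) 0) ((w ∘ Equiv.swap i j) ∘ Fin.succ) = _
    rw [h0, hcomp, hsym]
  have here : ∀ w : Fin (m+1+1) → X,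
      e w ≤ A * e (update w 1 (w 0)) ^ (p/(p+1)) * e (update w 0 (w 1)) ^ (1/(p+1)) := by
    intro w
    have H := hrec (w 0) (w ∘ Fin.succ)
    have e1 : e (update w 1 (w 0))
        = F (w 0) (update (w ∘ Fin.succ) ⟨0, hn⟩ (w 0)) := by
      show F ((update w 1 (w 0)) 0) ((update w 1 (w 0)) ∘ Fin.succ) = _
      rw [update_of_ne (Ne.symm one_ne_zero'), ← h01, update_succ_comp]
    have e2 : e (update w 0 (w 1)) = F ((w ∘ Fin.succ) ⟨0, hn⟩) (w ∘ Fin.succ) := by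
      show F ((update w 0 (w 1)) 0) ((update w 0 (w 1)) ∘ Fin.succ) = _
      rw [update_self, update_zero_comp, comp_apply, h01]
    rw [e1, e2]
    exact H
  have haux := aux (m+1) p A hp hA e he0 hese here (Fin.cons x₀ x)
  have hc0 : e (Fin.cons x₀ x) = F x₀ x := by
    simp only [hedef]
    rw [Fin.cons_zero]
    congr 1
  have hconst : ∀ c : X, e (fun _ => c) = F c (fun _ => c) := fun c => rfl
  simp only [hc0, Fin.cons_zero, Fin.cons_succ, hconst] at haux
  have hexp : ((m+1:ℕ):ℝ) + ((m+1:ℕ):ℝ) * (((m+1:ℕ):ℝ) - 1)/(2*p)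
      ≤ (p + 2) * ((p + 1) / p) ^ (m + 1 - 1) - (p + 1) := by
    have hg := geom_bound p hp m
    have hxx : ((m+1:ℕ):ℝ) + ((m+1:ℕ):ℝ) * (((m+1:ℕ):ℝ) - 1)/(2*p)
        = p + (m:ℝ) + 2 + (m:ℝ)*((m:ℝ)+1)/(2*p) - (p + 1) := by
      push_cast
      field_simp
      ring
    rw [hxx, Nat.add_sub_cancel]
    linarith
  have hmono : A ^ (((m+1:ℕ):ℝ) + ((m+1:ℕ):ℝ) * (((m+1:ℕ):ℝ) - 1)/(2*p))
      ≤ A ^ ((p + 2) * ((p + 1) / p) ^ (m + 1 - 1) - (p + 1)) :=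
    Real.rpow_le_rpow_of_exponent_le hA hexp
  refine le_trans haux ?_
  have hB : (0:ℝ) ≤ (F x₀ (fun _ => x₀)) ^ (p / (((m+1:ℕ):ℝ) + p)) :=
    Real.rpow_nonneg (hF0 _ _) _
  have hC : (0:ℝ) ≤ ∏ j : Fin (m+1), (F (x j) (fun _ => x j)) ^ (1 / (((m+1:ℕ):ℝ) + p)) :=
    Finset.prod_nonneg (fun j _ => Real.rpow_nonneg (hF0 _ _) _)
  exact mul_le_mul_of_nonneg_right (mul_le_mul_of_nonneg_right hmono hB) hC
end
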